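/- arXiv:2002.00057 — 8 statements merged into one kernel-verified Lean document; each statement's English description precedes it below -/
import Mathlib

section
/- Let F : ℝ^n → ℝ^n be a continuously differentiable monotone operator that is L-Lipschitz and has Λ-Lipschitz derivative, for some L, Λ > 0. Fix z^0 ∈ ℝ^n, and suppose there exists z* ∈ ℝ^n with F(z*) = 0 and ‖z^0 − z*‖ ≤ D for some D > 0. If 0 < η ≤ min{5/(ΛD), 1/(30L)} and the extragradient iterates are defined by z^{t+1} = z^t − ηF(z^t − ηF(z^t)) for t ≥ 0, then for every integer T ≥ 1, ‖F(z^T)‖ ≤ 2D/(η√T). -/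
section Helpers

lemma eg_key_norm_mono {E : Type*} [NormedAddCommGroup E] [InnerProductSpace ℝ E] (a b c : E)
    (h1 : (0:ℝ) ≤ inner ℝ (a - c) b)
    (h2 : (0:ℝ) ≤ inner ℝ (b - c) (b - a))
    (h3 : ‖b - c‖^2 ≤ (1/900) * ‖a - b‖^2) :
    ‖c‖ ≤ ‖a‖ := by
  have hS1 : (0:ℝ) ≤ inner ℝ ((599:ℝ)•a - (449:ℝ)•b - (150:ℝ)•c) ((599:ℝ)•a - (449:ℝ)•b - (150:ℝ)•c) :=
    real_inner_self_nonneg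
  have hS2 : (0:ℝ) ≤ inner ℝ (b - c) (b - c) := real_inner_self_nonneg
  have hab : ‖a - b‖^2 = ‖a‖^2 - 2 * inner ℝ a b + ‖b‖^2 := norm_sub_sq_real a b
  have hbc : ‖b - c‖^2 = ‖b‖^2 - 2 * inner ℝ b c + ‖c‖^2 := norm_sub_sq_real b c
  have cba : (inner ℝ b a : ℝ) = inner ℝ a b := real_inner_comm a b
  have cca : (inner ℝ c a : ℝ) = inner ℝ a c := real_inner_comm a c
  have ccb : (inner ℝ c b : ℝ) = inner ℝ b c := real_inner_comm b c
  simp only [inner_sub_left, inner_sub_right, real_inner_smul_left, real_inner_smul_right,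
    real_inner_self_eq_norm_sq, cba, cca, ccb] at h1 h2 hS1 hS2
  have hsq : ‖c‖^2 ≤ ‖a‖^2 := by nlinarith [h1, h2, h3, hS1, hS2, hab, hbc]
  nlinarith [norm_nonneg a, norm_nonneg c, hsq]

lemma eg_descent {E : Type*} [NormedAddCommGroup E] [InnerProductSpace ℝ E]
    (a b u : E) (η : ℝ) (hη : 0 < η)
    (hm : (0:ℝ) ≤ inner ℝ b (u - η • a))
    (hl : ‖b - a‖^2 ≤ (1/900) * ‖a‖^2) :
    ‖u - η • b‖^2 ≤ ‖u‖^2 - (899/900) * η^2 * ‖a‖^2 := by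
  have e1 : ‖u - η • b‖^2 = ‖u‖^2 - 2 * (η * inner ℝ u b) + η^2 * ‖b‖^2 := by
    rw [norm_sub_sq_real, norm_smul, real_inner_smul_right]
    simp [Real.norm_eq_abs, abs_of_pos hη]
    ring
  have e2 : ‖b - a‖^2 = ‖b‖^2 - 2 * inner ℝ b a + ‖a‖^2 := norm_sub_sq_real b a
  have hm' : (0:ℝ) ≤ inner ℝ b u - η * inner ℝ b a := by
    rwa [inner_sub_right, real_inner_smul_right] at hm
  have cub : (inner ℝ u b : ℝ) = inner ℝ b u := real_inner_comm b u
  nlinarith [hm', e1, e2, hl, sq_nonneg η, mul_pos hη hη]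

end Helpers

set_option maxHeartbeats 1000000 in
/-- Last-iterate convergence of the extragradient algorithm: if `F` is a continuously
differentiable monotone operator that is `L`-Lipschitz with `Λ`-Lipschitz derivative,
`F(z*) = 0`, `‖z⁰ − z*‖ ≤ D`, and `0 < η ≤ min{5/(ΛD), 1/(30L)}`, then the extragradient
iterates `z^{t+1} = z^t − η F(z^t − η F(z^t))` satisfy `‖F(z^T)‖ ≤ 2D/(η √T)` for all `T ≥ 1`. -/
theorem extragradient_last_iterate {n : ℕ}
    (F : EuclideanSpace ℝ (Fin n) → EuclideanSpace ℝ (Fin n))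
    (hF : ContDiff ℝ 1 F)
    (hmono : ∀ z z', (0 : ℝ) ≤ inner ℝ (F z - F z') (z - z'))
    (L Λ : ℝ) (hL : 0 < L) (hΛ : 0 < Λ)
    (hlip : ∀ z z', ‖F z - F z'‖ ≤ L * ‖z - z'‖)
    (hlipderiv : ∀ z z', ‖fderiv ℝ F z - fderiv ℝ F z'‖ ≤ Λ * ‖z - z'‖)
    (zstar : EuclideanSpace ℝ (Fin n)) (hzstar : F zstar = 0)
    (D : ℝ) (hD : 0 < D)
    (η : ℝ) (hη : 0 < η) (hηle : η ≤ min (5 / (Λ * D)) (1 / (30 * L)))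
    (z : ℕ → EuclideanSpace ℝ (Fin n))
    (hinit : ‖z 0 - zstar‖ ≤ D)
    (hrec : ∀ t : ℕ, z (t + 1) = z t - η • F (z t - η • F (z t))) :
    ∀ T : ℕ, 1 ≤ T → ‖F (z T)‖ ≤ 2 * D / (η * Real.sqrt T) := by
  -- step-size bound: η * L ≤ 1/30
  have hηL : η * L ≤ 1 / 30 := by
    have h1 : η ≤ 1 / (30 * L) := le_trans hηle (min_le_right _ _)
    rw [le_div_iff₀ (by positivity)] at h1
    linarith
  have hηLpos : 0 < η * L := mul_pos hη hL
  -- Lipschitz bound between w t and z t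
  have hwz : ∀ t : ℕ, ‖F (z t - η • F (z t)) - F (z t)‖^2 ≤ (1/900) * ‖F (z t)‖^2 := by
    intro t
    have h := hlip (z t - η • F (z t)) (z t)
    have hnorm : ‖(z t - η • F (z t)) - z t‖ = η * ‖F (z t)‖ := by
      have : (z t - η • F (z t)) - z t = -(η • F (z t)) := by abel
      rw [this, norm_neg, norm_smul, Real.norm_eq_abs, abs_of_pos hη]
    rw [hnorm] at h
    have h' : ‖F (z t - η • F (z t)) - F (z t)‖ ≤ (1/30) * ‖F (z t)‖ := by
      calc ‖F (z t - η • F (z t)) - F (z t)‖ ≤ L * (η * ‖F (z t)‖) := h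
        _ = (η * L) * ‖F (z t)‖ := by ring
        _ ≤ (1/30) * ‖F (z t)‖ := by
            apply mul_le_mul_of_nonneg_right hηL (norm_nonneg _)
    nlinarith [norm_nonneg (F (z t - η • F (z t)) - F (z t)), norm_nonneg (F (z t))]
  -- descent step
  have hdesc : ∀ t : ℕ,
      ‖z (t+1) - zstar‖^2 ≤ ‖z t - zstar‖^2 - (899/900) * η^2 * ‖F (z t)‖^2 := by
    intro t
    have hm : (0:ℝ) ≤ inner ℝ (F (z t - η • F (z t))) ((z t - zstar) - η • F (z t)) := by
      have h := hmono (z t - η • F (z t)) zstar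
      rw [hzstar, sub_zero] at h
      have e : (z t - η • F (z t)) - zstar = (z t - zstar) - η • F (z t) := by abel
      rwa [e] at h
    have key := eg_descent (F (z t)) (F (z t - η • F (z t))) (z t - zstar) η hη hm (hwz t)
    have e : (z t - zstar) - η • F (z t - η • F (z t)) = z (t+1) - zstar := by
      rw [hrec t]; abel
    rwa [e] at key
  -- norm monotonicity step
  have hnm : ∀ t : ℕ, ‖F (z (t+1))‖ ≤ ‖F (z t)‖ := by
    intro t
    set a := F (z t) with ha
    set b := F (z t - η • F (z t)) with hb
    set c := F (z (t+1)) with hc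
    have ezz : z t - z (t+1) = η • b := by rw [hrec t]; abel
    have eww : (z t - η • F (z t)) - z (t+1) = η • (b - a) := by
      rw [hrec t, smul_sub]; abel
    have h1 : (0:ℝ) ≤ inner ℝ (a - c) b := by
      have h := hmono (z t) (z (t+1))
      rw [ezz, real_inner_smul_right] at h
      nlinarith [h, hη]
    have h2 : (0:ℝ) ≤ inner ℝ (b - c) (b - a) := by
      have h := hmono (z t - η • F (z t)) (z (t+1))
      rw [eww, real_inner_smul_right] at h
      nlinarith [h, hη]
    have h3 : ‖b - c‖^2 ≤ (1/900) * ‖a - b‖^2 := by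
      have h := hlip (z t - η • F (z t)) (z (t+1))
      rw [eww, norm_smul, Real.norm_eq_abs, abs_of_pos hη] at h
      have h' : ‖b - c‖ ≤ (1/30) * ‖b - a‖ := by
        calc ‖b - c‖ ≤ L * (η * ‖b - a‖) := h
          _ = (η * L) * ‖b - a‖ := by ring
          _ ≤ (1/30) * ‖b - a‖ := mul_le_mul_of_nonneg_right hηL (norm_nonneg _)
      rw [norm_sub_rev a b]
      nlinarith [norm_nonneg (b - c), norm_nonneg (b - a)]
    exact eg_key_norm_mono a b c h1 h2 h3
  -- main invariant
  have main : ∀ T : ℕ, ‖z T - zstar‖^2 + (899/900) * η^2 * (T:ℝ) * ‖F (z T)‖^2 ≤ D^2 := by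
    intro T
    induction T with
    | zero =>
        simp only [Nat.cast_zero, mul_zero, zero_mul, add_zero]
        nlinarith [hinit, norm_nonneg (z 0 - zstar), hD]
    | succ T ih =>
        have hd := hdesc T
        have hn := hnm T
        have hn2 : ‖F (z (T+1))‖^2 ≤ ‖F (z T)‖^2 := by
          nlinarith [hn, norm_nonneg (F (z (T+1))), norm_nonneg (F (z T))]
        have hmul : (899/900) * η^2 * (T:ℝ) * ‖F (z (T+1))‖^2
            ≤ (899/900) * η^2 * (T:ℝ) * ‖F (z T)‖^2 := by
          apply mul_le_mul_of_nonneg_left hn2 (by positivity)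
        push_cast
        nlinarith [hd, hmul, ih]
  -- conclusion
  intro T hT
  have hTpos : (0:ℝ) < (T:ℝ) := by exact_mod_cast Nat.lt_of_lt_of_le Nat.zero_lt_one hT
  set r := Real.sqrt (T:ℝ) with hr
  have hrpos : 0 < r := Real.sqrt_pos.mpr hTpos
  have hr2 : r^2 = (T:ℝ) := Real.sq_sqrt hTpos.le
  have hbound : (899/900) * η^2 * (T:ℝ) * ‖F (z T)‖^2 ≤ D^2 := by
    have h := main T
    nlinarith [sq_nonneg ‖z T - zstar‖]
  rw [le_div_iff₀ (by positivity : 0 < η * r)]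
  have hx := norm_nonneg (F (z T))
  have h4 : (‖F (z T)‖ * (η * r))^2 ≤ (2*D)^2 := by
    have e : (‖F (z T)‖ * (η * r))^2 = η^2 * r^2 * ‖F (z T)‖^2 := by ring
    rw [e, hr2]
    nlinarith [hbound, hD]
  nlinarith [h4, hD, mul_nonneg (mul_nonneg hx hη.le) hrpos.le]
end

section
/- Let f : ℝ^m × ℝ^n → ℝ be twice continuously differentiable, convex in x for each fixed y and concave in y for each fixed x, and let F(x, y) = (∇_x f(x, y), −∇_y f(x, y)). Suppose F is L-Lipschitz and has Λ-Lipschitz derivative, and that there exists z* = (x*, y*) with F(z*) = 0 and ‖z^0 − z*‖ ≤ D for some D > 0 and initial point z^0. If 0 < η ≤ min{5/(ΛD), 1/(30L)} and the extragradient iterates are defined by z^{t+1} = z^t − ηF(z^t − ηF(z^t)), then for every integer T ≥ 1, writing z^T = (x^T, y^T), for all x' with ‖x' − x*‖ ≤ D and all y' with ‖y' − y*‖ ≤ D one has f(x^T, y') − f(x', y^T) ≤ 2√2·D²/(η√T). -/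
open scoped RealInnerProductSpace
open Filter Set Topology

theorem aux_convex_grad {E : Type*} [NormedAddCommGroup E] [InnerProductSpace ℝ E] [CompleteSpace E]
    {g : E → ℝ} (hg : ConvexOn ℝ Set.univ g) {v : E} (hd : DifferentiableAt ℝ g v) (u : E) :
    g v + ⟪gradient g v, u - v⟫ ≤ g u := by
  have hψ : HasDerivAt (fun t : ℝ => v + t • (u - v)) (u - v) 0 := by
    simpa using ((hasDerivAt_id (0:ℝ)).smul_const (u - v)).const_add v
  have hfd : HasFDerivAt g (fderiv ℝ g v) ((fun t : ℝ => v + t • (u - v)) 0) := by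
    simpa using hd.hasFDerivAt
  have hφ : HasDerivAt (fun t : ℝ => g (v + t • (u - v))) (fderiv ℝ g v (u - v)) 0 :=
    hfd.comp_hasDerivAt 0 hψ
  have hslope : Tendsto (slope (fun t : ℝ => g (v + t • (u - v))) 0) (𝓝[>] 0)
      (𝓝 (fderiv ℝ g v (u - v))) :=
    (hasDerivAt_iff_tendsto_slope.mp hφ).mono_left
      (nhdsWithin_mono 0 (fun t ht => ne_of_gt ht))
  have hbound : ∀ᶠ t in 𝓝[>] (0:ℝ), slope (fun t : ℝ => g (v + t • (u - v))) 0 t ≤ g u - g v := by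
    filter_upwards [Ioc_mem_nhdsGT_of_mem (Set.mem_Ico.mpr ⟨le_refl (0:ℝ), one_pos⟩)] with t ht
    have ht0 : 0 < t := ht.1
    have ha : (0:ℝ) ≤ 1 - t := by linarith [ht.2]
    have hcvx := hg.2 (Set.mem_univ v) (Set.mem_univ u) ha ht0.le
      (by ring : (1 - t) + t = 1)
    have hpt : (1 - t) • v + t • u = v + t • (u - v) := by
      rw [sub_smul, one_smul, smul_sub]; abel
    rw [hpt] at hcvx
    have : g (v + t • (u - v)) - g v ≤ t * (g u - g v) := by
      have : g (v + t • (u - v)) ≤ (1 - t) * g v + t * g u := by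
        simpa using hcvx
      nlinarith
    rw [slope_def_field]
    have h0 : v + (0:ℝ) • (u - v) = v := by simp
    rw [h0, div_le_iff₀ (by linarith : (0:ℝ) < t - 0)]
    nlinarith
  have hlim : fderiv ℝ g v (u - v) ≤ g u - g v := le_of_tendsto hslope hbound
  have hig : ⟪gradient g v, u - v⟫ = fderiv ℝ g v (u - v) := by
    simp [gradient, InnerProductSpace.toDual_symm_apply]
  linarith

theorem aux_concave_grad {E : Type*} [NormedAddCommGroup E] [InnerProductSpace ℝ E] [CompleteSpace E]
    {g : E → ℝ} (hg : ConcaveOn ℝ Set.univ g) {v : E} (hd : DifferentiableAt ℝ g v) (u : E) :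
    g u ≤ g v + ⟪gradient g v, u - v⟫ := by
  have hneg := aux_convex_grad hg.neg hd.neg u
  have hgrad : gradient (-g) v = - gradient g v := by
    have : (fun x => -g x) = -g := rfl
    simp [gradient, ← this, fderiv_neg, map_neg]
  simp only [Pi.neg_apply, hgrad, inner_neg_left] at hneg
  linarith


private lemma aux_sq_sum {A B D : ℝ} (hA0 : 0 ≤ A) (hB0 : 0 ≤ B) (hA : A ≤ D) (hB : B ≤ D) :
    A^2 + B^2 ≤ 2*D^2 := by nlinarith

private lemma aux_sqrt_two_lb : (1.414:ℝ) ≤ Real.sqrt 2 := by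
  nlinarith [Real.sq_sqrt (show (0:ℝ) ≤ 2 by norm_num), Real.sqrt_nonneg 2]

private lemma aux_S_bound {S D : ℝ} (h2 : S^2 ≤ 2*D^2) (hS0 : 0 ≤ S) (hD : 0 ≤ D) :
    S ≤ Real.sqrt 2 * D := by
  nlinarith [Real.sq_sqrt (show (0:ℝ) ≤ 2 by norm_num), Real.sqrt_nonneg 2,
    mul_nonneg (Real.sqrt_nonneg 2) hD]

private lemma aux_P_bound {P D : ℝ} (h2 : P^2 ≤ (900/899)*D^2) (hP0 : 0 ≤ P) (hD : 0 ≤ D) :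
    P ≤ 1.001*D := by nlinarith

private lemma aux_final {s D : ℝ} (hs : (1.414:ℝ) ≤ s) (hD : 0 ≤ D) :
    (1.001*D)*(D + s*D) ≤ 2*s*D^2 := by nlinarith [sq_nonneg D, mul_nonneg hD hD]

set_option maxHeartbeats 1000000 in
/-- Last-iterate primal-dual gap bound for extragradient on a smooth convex-concave saddle
point problem: with `F(x,y) = (∇ₓf(x,y), −∇_y f(x,y))` `L`-Lipschitz with `Λ`-Lipschitz
derivative, a saddle point `z* = (x*, y*)` with `F(z*) = 0`, `‖z⁰ − z*‖ ≤ D`, and step size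
`0 < η ≤ min{5/(ΛD), 1/(30L)}`, the extragradient iterates `z^{t+1} = z^t − ηF(z^t − ηF(z^t))`
satisfy `f(x^T, y') − f(x', y^T) ≤ 2√2 D²/(η√T)` for all `x' ∈ B̄(x*, D)`, `y' ∈ B̄(y*, D)`
and all `T ≥ 1`. -/
theorem extragradient_last_iterate_gap {m n : ℕ}
    (f : EuclideanSpace ℝ (Fin m) → EuclideanSpace ℝ (Fin n) → ℝ)
    (hf : ContDiff ℝ 2 (fun z : WithLp 2 (EuclideanSpace ℝ (Fin m) × EuclideanSpace ℝ (Fin n)) =>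
      f (WithLp.equiv 2 _ z).1 (WithLp.equiv 2 _ z).2))
    (hconv : ∀ y, ConvexOn ℝ Set.univ (fun x => f x y))
    (hconc : ∀ x, ConcaveOn ℝ Set.univ (fun y => f x y))
    (F : WithLp 2 (EuclideanSpace ℝ (Fin m) × EuclideanSpace ℝ (Fin n)) →
        WithLp 2 (EuclideanSpace ℝ (Fin m) × EuclideanSpace ℝ (Fin n)))
    (hFdef : ∀ z, F z = (WithLp.equiv 2 _).symm
      (gradient (fun x => f x (WithLp.equiv 2 _ z).2) (WithLp.equiv 2 _ z).1,
       -gradient (fun y => f (WithLp.equiv 2 _ z).1 y) (WithLp.equiv 2 _ z).2))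
    (L Λ : ℝ) (hL : 0 < L) (hΛ : 0 < Λ)
    (hlip : ∀ z z', ‖F z - F z'‖ ≤ L * ‖z - z'‖)
    (hlipderiv : ∀ z z', ‖fderiv ℝ F z - fderiv ℝ F z'‖ ≤ Λ * ‖z - z'‖)
    (zstar : WithLp 2 (EuclideanSpace ℝ (Fin m) × EuclideanSpace ℝ (Fin n)))
    (hzstar : F zstar = 0)
    (D : ℝ) (hD : 0 < D)
    (η : ℝ) (hη : 0 < η) (hηle : η ≤ min (5 / (Λ * D)) (1 / (30 * L)))
    (z : ℕ → WithLp 2 (EuclideanSpace ℝ (Fin m) × EuclideanSpace ℝ (Fin n)))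
    (hinit : ‖z 0 - zstar‖ ≤ D)
    (hrec : ∀ t : ℕ, z (t + 1) = z t - η • F (z t - η • F (z t))) :
    ∀ T : ℕ, 1 ≤ T →
      ∀ (x' : EuclideanSpace ℝ (Fin m)) (y' : EuclideanSpace ℝ (Fin n)),
        ‖x' - (WithLp.equiv 2 _ zstar).1‖ ≤ D →
        ‖y' - (WithLp.equiv 2 _ zstar).2‖ ≤ D →
        f (WithLp.equiv 2 _ (z T)).1 y' - f x' (WithLp.equiv 2 _ (z T)).2
          ≤ 2 * Real.sqrt 2 * D ^ 2 / (η * Real.sqrt T) := by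
  intro T hT x' y' hx' hy'
  -- basic step size facts
  have hηL : η * L ≤ 1 / 30 := by
    have h2 : η ≤ 1 / (30 * L) := le_trans hηle (min_le_right _ _)
    have := mul_le_mul_of_nonneg_right h2 hL.le
    calc η * L ≤ 1 / (30 * L) * L := this
      _ = 1 / 30 := by
        field_simp
  have hηL0 : 0 ≤ η * L := by positivity
  -- differentiability of the partial maps
  have hG := hf.differentiable (by norm_num)
  have hdx : ∀ y, Differentiable ℝ (fun x => f x y) := by
    intro y
    exact hG.comp ((WithLp.prodContinuousLinearEquiv 2 ℝ
      (EuclideanSpace ℝ (Fin m)) (EuclideanSpace ℝ (Fin n))).symm.differentiable.comp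
      (differentiable_id.prodMk (differentiable_const _)))
  have hdy : ∀ x, Differentiable ℝ (fun y => f x y) := by
    intro x
    exact hG.comp ((WithLp.prodContinuousLinearEquiv 2 ℝ
      (EuclideanSpace ℝ (Fin m)) (EuclideanSpace ℝ (Fin n))).symm.differentiable.comp
      ((differentiable_const _).prodMk differentiable_id))
  -- gradient inequalities
  have hcv : ∀ (y : EuclideanSpace ℝ (Fin n)) (x u : EuclideanSpace ℝ (Fin m)),
      f x y + ⟪gradient (fun x => f x y) x, u - x⟫ ≤ f u y :=
    fun y x u => aux_convex_grad (hconv y) ((hdx y) x) u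
  have hcc : ∀ (x : EuclideanSpace ℝ (Fin m)) (y u : EuclideanSpace ℝ (Fin n)),
      f x u ≤ f x y + ⟪gradient (fun y => f x y) y, u - y⟫ :=
    fun x y u => aux_concave_grad (hconc x) ((hdy x) y) u
  -- inner products against F
  have hFinner : ∀ p q : WithLp 2 (EuclideanSpace ℝ (Fin m) × EuclideanSpace ℝ (Fin n)),
      ⟪F p, q⟫ =
      ⟪gradient (fun x => f x (WithLp.equiv 2 _ p).2) (WithLp.equiv 2 _ p).1, q.fst⟫
      - ⟪gradient (fun y => f (WithLp.equiv 2 _ p).1 y) (WithLp.equiv 2 _ p).2, q.snd⟫ := by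
    intro p q
    rw [hFdef p, WithLp.prod_inner_apply]
    simp [sub_eq_add_neg]
  -- monotonicity of F
  have hmono : ∀ p q : WithLp 2 (EuclideanSpace ℝ (Fin m) × EuclideanSpace ℝ (Fin n)),
      0 ≤ ⟪F p - F q, p - q⟫ := by
    intro p q
    rw [inner_sub_left, hFinner p (p - q), hFinner q (p - q)]
    have hfst : (p - q).fst = (WithLp.equiv 2 _ p).1 - (WithLp.equiv 2 _ q).1 := rfl
    have hsnd : (p - q).snd = (WithLp.equiv 2 _ p).2 - (WithLp.equiv 2 _ q).2 := rfl
    rw [hfst, hsnd]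
    set x := (WithLp.equiv 2 _ p).1
    set y := (WithLp.equiv 2 _ p).2
    set x'' := (WithLp.equiv 2 _ q).1
    set y'' := (WithLp.equiv 2 _ q).2
    have i1 := hcv y x x''
    have i2 := hcv y'' x'' x
    have i3 := hcc x y y''
    have i4 := hcc x'' y'' y
    have e1 : ⟪gradient (fun x => f x y) x, x'' - x⟫
        = -⟪gradient (fun x => f x y) x, x - x''⟫ := by rw [← inner_neg_right, neg_sub]
    have e2 : ⟪gradient (fun y => f x y) y, y'' - y⟫
        = -⟪gradient (fun y => f x y) y, y - y''⟫ := by rw [← inner_neg_right, neg_sub]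
    have e3 : ⟪gradient (fun x => f x y'') x'', x - x''⟫
        = -⟪gradient (fun x => f x y'') x'', x'' - x⟫ := by rw [← inner_neg_right, neg_sub]
    have e4 : ⟪gradient (fun y => f x'' y) y'', y - y''⟫
        = -⟪gradient (fun y => f x'' y) y'', y'' - y⟫ := by rw [← inner_neg_right, neg_sub]
    rw [e1] at i1
    rw [e2] at i3
    linarith
  -- one-step energy decrease
  have hstep : ∀ t : ℕ, ‖z (t+1) - zstar‖^2 + (1 - (η*L)^2) * η^2 * ‖F (z t)‖^2
      ≤ ‖z t - zstar‖^2 := by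
    intro t
    have hz1 := hrec t
    set a := F (z t) with ha
    set W := z t - η • a with hW
    set b := F W with hb
    have hm : 0 ≤ ⟪b, W - zstar⟫ := by
      have h := hmono W zstar
      rwa [hzstar, sub_zero] at h
    have hbu : ⟪b, z t - zstar⟫ = η * ⟪b, a⟫ + ⟪b, W - zstar⟫ := by
      have hsplit : z t - zstar = η • a + (W - zstar) := by rw [hW]; abel
      rw [hsplit, inner_add_right, real_inner_smul_right]
    have hbu2 : 2 * η * ⟪b, z t - zstar⟫ = 2 * η * (η * ⟪b, a⟫ + ⟪b, W - zstar⟫) := by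
      rw [hbu]
    have hlip1 : ‖b - a‖ ≤ L * (η * ‖a‖) := by
      have h := hlip W (z t)
      have hWz : W - z t = -(η • a) := by rw [hW]; abel
      rw [hWz, norm_neg, norm_smul, Real.norm_eq_abs, abs_of_pos hη] at h
      exact h
    have hsq : ‖b - a‖^2 ≤ (L * (η * ‖a‖))^2 := pow_le_pow_left₀ (norm_nonneg _) hlip1 2
    have hsq2 : η^2 * ‖b - a‖^2 ≤ η^2 * (L * (η * ‖a‖))^2 :=
      mul_le_mul_of_nonneg_left hsq (sq_nonneg η)
    have e2 : ‖b - a‖^2 = ‖b‖^2 - 2*⟪b, a⟫ + ‖a‖^2 := norm_sub_sq_real b a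
    rw [e2] at hsq2
    have hu : z (t+1) - zstar = (z t - zstar) - η • b := by rw [hz1]; abel
    have e1 : ‖(z t - zstar) - η • b‖^2
        = ‖z t - zstar‖^2 - 2*(η*⟪b, z t - zstar⟫) + η^2*‖b‖^2 := by
      rw [norm_sub_sq_real, real_inner_smul_right, norm_smul, Real.norm_eq_abs, abs_of_pos hη,
        real_inner_comm (z t - zstar) b]
      ring
    rw [hu, e1]
    have hmη : 0 ≤ 2 * η * ⟪b, W - zstar⟫ := by
      have : (0:ℝ) ≤ 2 * η := by positivity
      exact mul_nonneg this hm
    nlinarith [hbu2, hsq2, hmη]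
  -- the operator norm along iterates is nonincreasing
  have hham : ∀ t : ℕ, ‖F (z (t+1))‖ ≤ ‖F (z t)‖ := by
    intro t
    have hz1 := hrec t
    set a := F (z t) with ha
    set W := z t - η • a with hW
    set b := F W with hb
    set c := F (z (t+1)) with hc
    have hm := hmono (z t) (z (t+1))
    have hd : z t - z (t+1) = η • b := by rw [hz1]; abel
    rw [hd, real_inner_smul_right] at hm
    have h2 : 0 ≤ ⟪a - c, b⟫ := by nlinarith [hm, hη]
    rw [inner_sub_left] at h2
    have hcb : ⟪b, c⟫ ≤ ⟪b, a⟫ := by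
      have e3 := real_inner_comm b c
      have e4 := real_inner_comm b a
      linarith
    have hl : ‖b - c‖ ≤ L * (η * ‖b - a‖) := by
      have h := hlip W (z (t+1))
      have hWz : W - z (t+1) = η • (b - a) := by rw [hz1, hW, smul_sub]; abel
      rw [hWz, norm_smul, Real.norm_eq_abs, abs_of_pos hη] at h
      exact h
    have hsq : ‖b - c‖^2 ≤ (L * (η * ‖b - a‖))^2 := pow_le_pow_left₀ (norm_nonneg _) hl 2
    have e1 : ‖b - c‖^2 = ‖b‖^2 - 2*⟪b, c⟫ + ‖c‖^2 := norm_sub_sq_real b c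
    have e2 : ‖b - a‖^2 = ‖b‖^2 - 2*⟪b, a⟫ + ‖a‖^2 := norm_sub_sq_real b a
    have hκ1 : (η*L)^2 * ‖b - a‖^2 ≤ 1 * ‖b - a‖^2 := by
      apply mul_le_mul_of_nonneg_right _ (sq_nonneg _)
      nlinarith [hηL, hηL0]
    have hc2 : ‖c‖^2 ≤ ‖a‖^2 := by nlinarith [hsq, hκ1]
    nlinarith [hc2, norm_nonneg a, norm_nonneg c]
  -- summed energy bound
  have hinv : ∀ t : ℕ, ‖z t - zstar‖^2
      + (1 - (η*L)^2) * η^2 * (∑ s ∈ Finset.range t, ‖F (z s)‖^2) ≤ D^2 := by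
    intro t
    induction t with
    | zero => simpa using pow_le_pow_left₀ (norm_nonneg _) hinit 2
    | succ t ih =>
      rw [Finset.sum_range_succ, mul_add]
      have h := hstep t
      linarith
  have hanti : ∀ s t : ℕ, s ≤ t → ‖F (z t)‖ ≤ ‖F (z s)‖ := by
    have hA : Antitone (fun t : ℕ => ‖F (z t)‖) := antitone_nat_of_succ_le hham
    exact fun s t hst => hA hst
  have hsum_lb : (T:ℝ) * ‖F (z T)‖^2 ≤ ∑ s ∈ Finset.range T, ‖F (z s)‖^2 := by
    have h := Finset.card_nsmul_le_sum (Finset.range T) (fun s => ‖F (z s)‖^2) (‖F (z T)‖^2)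
      (fun s hs => pow_le_pow_left₀ (norm_nonneg _)
        (hanti s T (le_of_lt (Finset.mem_range.mp hs))) 2)
    simpa [Finset.card_range, nsmul_eq_mul] using h
  have hC : (0:ℝ) ≤ (1 - (η*L)^2) * η^2 := by
    have hκ1 : (η*L)^2 * η^2 ≤ 1 * η^2 := by
      apply mul_le_mul_of_nonneg_right _ (sq_nonneg η)
      nlinarith [hηL, hηL0]
    nlinarith [hκ1]
  have hsum0 : (0:ℝ) ≤ ∑ s ∈ Finset.range T, ‖F (z s)‖^2 :=
    Finset.sum_nonneg (fun s _ => sq_nonneg _)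
  have hZT : ‖z T - zstar‖ ≤ D := by
    have h1 := hinv T
    nlinarith [norm_nonneg (z T - zstar), hD.le, mul_nonneg hC hsum0]
  have hRT : (899/900) * ((T:ℝ) * (η^2 * ‖F (z T)‖^2)) ≤ D^2 := by
    have h1 := hinv T
    have hκsq : (η*L)^2 ≤ 1/900 := by nlinarith [hηL, hηL0]
    have h2 := mul_le_mul_of_nonneg_left hsum_lb hC
    have hTN : (0:ℝ) ≤ (T:ℝ) * (η^2 * ‖F (z T)‖^2) := by positivity
    nlinarith [sq_nonneg (‖z T - zstar‖)]
  -- square root facts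
  have hR2 : Real.sqrt T ^ 2 = (T:ℝ) := Real.sq_sqrt (Nat.cast_nonneg T)
  have hR1 : (1:ℝ) ≤ Real.sqrt T := by
    rw [show (1:ℝ) = Real.sqrt 1 by rw [Real.sqrt_one]]
    exact Real.sqrt_le_sqrt (by exact_mod_cast hT)
  have hs2 : Real.sqrt 2 ^ 2 = 2 := Real.sq_sqrt (by norm_num)
  have hs2n : (0:ℝ) ≤ Real.sqrt 2 := Real.sqrt_nonneg 2
  set z' := (WithLp.equiv 2 (EuclideanSpace ℝ (Fin m) × EuclideanSpace ℝ (Fin n))).symm (x', y')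
    with hz'def
  -- gap bound via convexity/concavity at the last iterate
  have hgap : f (WithLp.equiv 2 _ (z T)).1 y' - f x' (WithLp.equiv 2 _ (z T)).2
      ≤ ⟪F (z T), z T - z'⟫ := by
    have hfst : (z T - z').fst = (WithLp.equiv 2 _ (z T)).1 - x' := rfl
    have hsnd : (z T - z').snd = (WithLp.equiv 2 _ (z T)).2 - y' := rfl
    rw [hFinner (z T) (z T - z'), hfst, hsnd]
    set xT := (WithLp.equiv 2 _ (z T)).1
    set yT := (WithLp.equiv 2 _ (z T)).2
    have i1 := hcv yT xT x'
    have i2 := hcc xT yT y'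
    have e1 : ⟪gradient (fun x => f x yT) xT, x' - xT⟫
        = -⟪gradient (fun x => f x yT) xT, xT - x'⟫ := by rw [← inner_neg_right, neg_sub]
    have e2 : ⟪gradient (fun y => f xT y) yT, y' - yT⟫
        = -⟪gradient (fun y => f xT y) yT, yT - y'⟫ := by rw [← inner_neg_right, neg_sub]
    rw [e1] at i1
    rw [e2] at i2
    linarith
  have hCS : ⟪F (z T), z T - z'⟫ ≤ ‖F (z T)‖ * ‖z T - z'‖ := real_inner_le_norm _ _
  have htri : ‖z T - z'‖ ≤ ‖z T - zstar‖ + ‖zstar - z'‖ := by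
    have h := norm_add_le (z T - zstar) (zstar - z')
    simpa [sub_add_sub_cancel] using h
  have hS2 : ‖zstar - z'‖^2 ≤ 2*D^2 := by
    have e : ‖zstar - z'‖^2
        = ‖(WithLp.equiv 2 _ zstar).1 - x'‖^2 + ‖(WithLp.equiv 2 _ zstar).2 - y'‖^2 := by
      have hfst : (zstar - z').fst = (WithLp.equiv 2 _ zstar).1 - x' := rfl
      have hsnd : (zstar - z').snd = (WithLp.equiv 2 _ zstar).2 - y' := rfl
      rw [← real_inner_self_eq_norm_sq, WithLp.prod_inner_apply, show (zstar - z').ofLp.1 = _ from hfst,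
        show (zstar - z').ofLp.2 = _ from hsnd,
        real_inner_self_eq_norm_sq, real_inner_self_eq_norm_sq]
    have hx2 : ‖(WithLp.equiv 2 _ zstar).1 - x'‖ ≤ D := by rw [norm_sub_rev]; exact hx'
    have hy2 : ‖(WithLp.equiv 2 _ zstar).2 - y'‖ ≤ D := by rw [norm_sub_rev]; exact hy'
    rw [e]
    exact aux_sq_sum (norm_nonneg _) (norm_nonneg _) hx2 hy2
  have hS : ‖zstar - z'‖ ≤ Real.sqrt 2 * D := aux_S_bound hS2 (norm_nonneg _) hD.le
  have hPsq : (η * Real.sqrt T * ‖F (z T)‖)^2 ≤ (900/899) * D^2 := by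
    have e : (η * Real.sqrt T * ‖F (z T)‖)^2 = (T:ℝ) * (η^2 * ‖F (z T)‖^2) := by
      rw [mul_pow, mul_pow, hR2]; ring
    rw [e]; linarith [hRT]
  have hP0 : 0 ≤ η * Real.sqrt T * ‖F (z T)‖ := by positivity
  have hPD : η * Real.sqrt T * ‖F (z T)‖ ≤ 1.001 * D := aux_P_bound hPsq hP0 hD.le

  have hfinal : ‖F (z T)‖ * ‖z T - z'‖ ≤ 2 * Real.sqrt 2 * D^2 / (η * Real.sqrt T) := by
    rw [le_div_iff₀ (by positivity : (0:ℝ) < η * Real.sqrt T)]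
    have h1 : ‖F (z T)‖ * ‖z T - z'‖ * (η * Real.sqrt T)
        = (η * Real.sqrt T * ‖F (z T)‖) * ‖z T - z'‖ := by ring
    rw [h1]
    have h2 : ‖z T - z'‖ ≤ D + Real.sqrt 2 * D := by linarith [htri, hS, hZT]
    have h3 : (η * Real.sqrt T * ‖F (z T)‖) * ‖z T - z'‖
        ≤ (1.001*D) * (D + Real.sqrt 2 * D) :=
      mul_le_mul hPD h2 (norm_nonneg _) (by positivity)
    have h4 : (1.001*D) * (D + Real.sqrt 2 * D) ≤ 2 * Real.sqrt 2 * D^2 :=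
      aux_final aux_sqrt_two_lb hD.le
    linarith
  calc f (WithLp.equiv 2 _ (z T)).1 y' - f x' (WithLp.equiv 2 _ (z T)).2
      ≤ ⟪F (z T), z T - z'⟫ := hgap
    _ ≤ ‖F (z T)‖ * ‖z T - z'‖ := hCS
    _ ≤ 2 * Real.sqrt 2 * D ^ 2 / (η * Real.sqrt T) := hfinal
end

section
/- Let F : ℝ^n → ℝ^n be a continuously differentiable monotone operator that is L-Lipschitz and has Λ-Lipschitz derivative, and let η > 0. Then for every z ∈ ℝ^n there exist matrices A_z, B_z ∈ ℝ^{n×n} such that A_z + A_zᵀ and B_z + B_zᵀ are positive semidefinite, ‖A_z‖_σ ≤ L, ‖B_z‖_σ ≤ L, ‖A_z − B_z‖_σ ≤ (ηΛ/2)·‖F(z) − F(z − ηF(z))‖, and F(z − ηF(z − ηF(z))) = F(z) − ηA_z F(z) + η² A_z B_z F(z). -/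
open Matrix

/-- The spectral (operator) norm of a real matrix. -/
noncomputable def specNorm {n : ℕ} (A : Matrix (Fin n) (Fin n) ℝ) : ℝ :=
  ‖Matrix.toEuclideanCLM (𝕜 := ℝ) A‖

/-- A matrix acting on a Euclidean vector. -/
noncomputable def mApp {n : ℕ} (A : Matrix (Fin n) (Fin n) ℝ)
    (v : EuclideanSpace ℝ (Fin n)) : EuclideanSpace ℝ (Fin n) :=
  Matrix.toEuclideanCLM (𝕜 := ℝ) A v

open MeasureTheory intervalIntegral

section aux

variable {n : ℕ}

local notation "E" => EuclideanSpace ℝ (Fin n)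

lemma aux_inner_fderiv_nonneg (F : E → E) (hF : ContDiff ℝ 1 F)
    (hmono : ∀ z z', (0 : ℝ) ≤ inner ℝ (F z - F z') (z - z')) (x v : E) :
    0 ≤ (inner ℝ (fderiv ℝ F x v) v : ℝ) := by
  set g : ℝ → ℝ := fun t => inner ℝ (F (x + t • v) - F x) v with hg
  have hpath : ∀ t : ℝ, HasDerivAt (fun s : ℝ => x + s • v) v t := fun t => by
    simpa using ((hasDerivAt_id t).smul_const v).const_add x
  have hFd : HasDerivAt (fun s : ℝ => F (x + s • v)) (fderiv ℝ F (x + (0:ℝ) • v) v) 0 :=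
    ((hF.differentiable one_ne_zero (x + (0:ℝ) • v)).hasFDerivAt).comp_hasDerivAt 0 (hpath 0)
  have hd : HasDerivAt g ((inner ℝ (fderiv ℝ F x v) v : ℝ)) 0 := by
    have h2 : HasDerivAt (fun s : ℝ => F (x + s • v) - F x) (fderiv ℝ F x v) 0 := by
      simpa using hFd.sub_const (F x)
    have := h2.inner ℝ (hasDerivAt_const (0:ℝ) v)
    simpa using this
  have hslope : ∀ t : ℝ, t ≠ 0 → 0 ≤ slope g 0 t := by
    intro t ht
    have hm := hmono (x + t • v) x
    have hsimp : ((x + t • v) - x) = t • v := by abel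
    rw [hsimp, real_inner_smul_right] at hm
    have hg0 : g 0 = 0 := by simp [hg]
    have hs : slope g 0 t = (t * g t) / t ^ 2 := by
      rw [slope_def_field, hg0]
      field_simp
      ring
    rw [hs]
    apply div_nonneg _ (sq_nonneg t)
    simpa [hg] using hm
  have htends := hasDerivAt_iff_tendsto_slope.mp hd
  refine ge_of_tendsto htends ?_
  filter_upwards [self_mem_nhdsWithin] with t ht
  exact hslope t ht

lemma aux_seg (F : E → E) (hF : ContDiff ℝ 1 F) (a b : E) :
    F b = F a + (∫ t in (0:ℝ)..1, fderiv ℝ F (a + t • (b - a))) (b - a) := by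
  have hD : Continuous fun t : ℝ => fderiv ℝ F (a + t • (b - a)) :=
    (hF.continuous_fderiv one_ne_zero).comp (by continuity)
  have hInt : IntervalIntegrable (fun t : ℝ => fderiv ℝ F (a + t • (b - a)))
      volume 0 1 := hD.intervalIntegrable 0 1
  rw [ContinuousLinearMap.intervalIntegral_apply hInt]
  have key : ∫ t in (0:ℝ)..1, (fderiv ℝ F (a + t • (b - a))) (b - a)
      = F (a + (1:ℝ) • (b - a)) - F (a + (0:ℝ) • (b - a)) := by
    apply integral_eq_sub_of_hasDerivAt (f := fun t : ℝ => F (a + t • (b - a)))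
    · intro t _
      have hpath : HasDerivAt (fun s : ℝ => a + s • (b - a)) (b - a) t := by
        simpa using ((hasDerivAt_id t).smul_const (b - a)).const_add a
      exact ((hF.differentiable one_ne_zero _).hasFDerivAt).comp_hasDerivAt t hpath
    · exact ((ContinuousLinearMap.apply ℝ E (b - a)).continuous.comp hD).intervalIntegrable 0 1
  rw [key]
  simp

lemma aux_psd (G : E →L[ℝ] E) (h : ∀ v, 0 ≤ (inner ℝ (G v) v : ℝ)) :
    (((toEuclideanCLM (𝕜 := ℝ)).symm G) + ((toEuclideanCLM (𝕜 := ℝ)).symm G)ᵀ).PosSemidef := by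
  set A : Matrix (Fin n) (Fin n) ℝ := (toEuclideanCLM (𝕜 := ℝ)).symm G with hA
  have hGA : toEuclideanCLM (𝕜 := ℝ) A = G := (StarAlgEquiv.apply_symm_apply _ _)
  refine Matrix.PosSemidef.of_dotProduct_mulVec_nonneg ?_ ?_
  · ext i j
    simp [Matrix.conjTranspose_apply, Matrix.transpose_apply, add_comm]
  · intro x
    have hx : (star x) ⬝ᵥ ((A + Aᵀ) *ᵥ x) = (A *ᵥ x) ⬝ᵥ x + (Aᵀ *ᵥ x) ⬝ᵥ x := by
      simp [Matrix.add_mulVec, dotProduct_add, dotProduct_comm]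
    have h2 : (Aᵀ *ᵥ x) ⬝ᵥ x = (A *ᵥ x) ⬝ᵥ x := by
      rw [Matrix.mulVec_transpose, ← Matrix.dotProduct_mulVec, dotProduct_comm]
    have hinner : (inner ℝ (G (WithLp.toLp 2 x)) (WithLp.toLp 2 x) : ℝ)
        = (A *ᵥ x) ⬝ᵥ x := by
      rw [← hGA]
      simp only [toEuclideanCLM_toLp]
      rw [PiLp.inner_apply]
      simp [Matrix.toLin'_apply, dotProduct, mul_comm]
    have := h (WithLp.toLp 2 x)
    rw [hinner] at this
    rw [hx, h2]
    linarith

end aux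

set_option maxHeartbeats 1000000 in
set_option synthInstance.maxHeartbeats 400000 in
/-- For a continuously differentiable monotone operator `F` that is `L`-Lipschitz with
`Λ`-Lipschitz derivative, and `η > 0`, for every `z` there are matrices `A_z, B_z` with
`A_z + A_zᵀ`, `B_z + B_zᵀ` PSD, `‖A_z‖_σ, ‖B_z‖_σ ≤ L`,
`‖A_z − B_z‖_σ ≤ (ηΛ/2)·‖F(z) − F(z − ηF(z))‖`, and
`F(z − ηF(z − ηF(z))) = F(z) − η A_z F(z) + η² A_z B_z F(z)`. -/
theorem ab_exist {n : ℕ}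
    (F : EuclideanSpace ℝ (Fin n) → EuclideanSpace ℝ (Fin n))
    (hF : ContDiff ℝ 1 F)
    (hmono : ∀ z z', (0 : ℝ) ≤ inner ℝ (F z - F z') (z - z'))
    (L Λ : ℝ) (hL : 0 < L) (hΛ : 0 < Λ)
    (hlip : ∀ z z', ‖F z - F z'‖ ≤ L * ‖z - z'‖)
    (hlipderiv : ∀ z z', ‖fderiv ℝ F z - fderiv ℝ F z'‖ ≤ Λ * ‖z - z'‖)
    (η : ℝ) (hη : 0 < η) :
    ∀ z : EuclideanSpace ℝ (Fin n),
      ∃ A B : Matrix (Fin n) (Fin n) ℝ,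
        (A + Aᵀ).PosSemidef ∧ (B + Bᵀ).PosSemidef ∧
        specNorm A ≤ L ∧ specNorm B ≤ L ∧
        specNorm (A - B) ≤ η * Λ / 2 * ‖F z - F (z - η • F z)‖ ∧
        F (z - η • F (z - η • F z))
          = F z - η • mApp A (F z) + (η ^ 2) • mApp A (mApp B (F z)) := by
  intro z
  set w := z - η • F z with hw
  set u := z - η • F w with hu
  set DA : ℝ → (EuclideanSpace ℝ (Fin n) →L[ℝ] EuclideanSpace ℝ (Fin n)) :=
    fun t => fderiv ℝ F (z + t • (u - z)) with hDA
  set DB : ℝ → (EuclideanSpace ℝ (Fin n) →L[ℝ] EuclideanSpace ℝ (Fin n)) :=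
    fun t => fderiv ℝ F (z + t • (w - z)) with hDB
  have hDAc : Continuous DA := (hF.continuous_fderiv one_ne_zero).comp
    (continuous_const.add (continuous_id.smul continuous_const))
  have hDBc : Continuous DB := (hF.continuous_fderiv one_ne_zero).comp
    (continuous_const.add (continuous_id.smul continuous_const))
  have hIA : IntervalIntegrable DA MeasureTheory.volume 0 1 := hDAc.intervalIntegrable 0 1
  have hIB : IntervalIntegrable DB MeasureTheory.volume 0 1 := hDBc.intervalIntegrable 0 1
  set GA : EuclideanSpace ℝ (Fin n) →L[ℝ] EuclideanSpace ℝ (Fin n) :=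
    ∫ t in (0:ℝ)..1, DA t with hGAdef
  set GB : EuclideanSpace ℝ (Fin n) →L[ℝ] EuclideanSpace ℝ (Fin n) :=
    ∫ t in (0:ℝ)..1, DB t with hGBdef
  have hpos : ∀ x v : EuclideanSpace ℝ (Fin n), 0 ≤ (inner ℝ (fderiv ℝ F x v) v : ℝ) :=
    aux_inner_fderiv_nonneg F hF hmono
  -- positivity of integrated derivative
  have hGpos : ∀ (DD : ℝ → (EuclideanSpace ℝ (Fin n) →L[ℝ] EuclideanSpace ℝ (Fin n))),
      Continuous DD → (∀ t v, 0 ≤ (inner ℝ (DD t v) v : ℝ)) →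
      ∀ v, 0 ≤ (inner ℝ ((∫ t in (0:ℝ)..1, DD t) v) v : ℝ) := by
    intro DD hc hp v
    rw [ContinuousLinearMap.intervalIntegral_apply (hc.intervalIntegrable 0 1) v]
    have happ : IntervalIntegrable (fun t => DD t v) MeasureTheory.volume 0 1 :=
      ((ContinuousLinearMap.apply ℝ (EuclideanSpace ℝ (Fin n)) v).continuous.comp
        hc).intervalIntegrable 0 1
    have heq : (inner ℝ (∫ t in (0:ℝ)..1, DD t v) v : ℝ)
        = ∫ t in (0:ℝ)..1, (inner ℝ (DD t v) v : ℝ) := by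
      rw [real_inner_comm]
      calc (inner ℝ v (∫ t in (0:ℝ)..1, DD t v) : ℝ)
          = innerSL ℝ v (∫ t in (0:ℝ)..1, DD t v) := rfl
        _ = ∫ t in (0:ℝ)..1, innerSL ℝ v (DD t v) :=
            (ContinuousLinearMap.intervalIntegral_comp_comm _ happ).symm
        _ = ∫ t in (0:ℝ)..1, (inner ℝ (DD t v) v : ℝ) := by
            apply intervalIntegral.integral_congr
            intro t _
            simp only [innerSL_apply_apply, PiLp.inner_apply, RCLike.inner_apply, conj_trivial]
            exact Finset.sum_congr rfl fun i _ => mul_comm _ _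
    rw [heq]
    exact intervalIntegral.integral_nonneg (by norm_num) (fun t _ => hp t v)
  -- Lipschitz constant bound for fderiv
  have hlipF : LipschitzWith (Real.toNNReal L) F := by
    apply LipschitzWith.of_dist_le_mul
    intro x y
    simpa [dist_eq_norm, Real.coe_toNNReal L hL.le] using hlip x y
  have hfd : ∀ x : EuclideanSpace ℝ (Fin n), ‖fderiv ℝ F x‖ ≤ L := fun x => by
    simpa [Real.coe_toNNReal L hL.le] using
      norm_fderiv_le_of_lipschitz ℝ hlipF (x₀ := x)
  have hnormI : ∀ (DD : ℝ → (EuclideanSpace ℝ (Fin n) →L[ℝ] EuclideanSpace ℝ (Fin n))),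
      (∀ t, ‖DD t‖ ≤ L) → ‖∫ t in (0:ℝ)..1, DD t‖ ≤ L := by
    intro DD hb
    have := intervalIntegral.norm_integral_le_of_norm_le_const
      (a := (0:ℝ)) (b := 1) (f := DD) (C := L) (fun t _ => hb t)
    simpa using this
  have hsn : ∀ Gg : EuclideanSpace ℝ (Fin n) →L[ℝ] EuclideanSpace ℝ (Fin n),
      specNorm ((toEuclideanCLM (𝕜 := ℝ)).symm Gg) = ‖Gg‖ := fun Gg => by
    rw [specNorm, StarAlgEquiv.apply_symm_apply]
  have hmApp : ∀ (Gg : EuclideanSpace ℝ (Fin n) →L[ℝ] EuclideanSpace ℝ (Fin n)) v,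
      mApp ((toEuclideanCLM (𝕜 := ℝ)).symm Gg) v = Gg v := fun Gg v => by
    rw [mApp, StarAlgEquiv.apply_symm_apply]
  refine ⟨(toEuclideanCLM (𝕜 := ℝ)).symm GA, (toEuclideanCLM (𝕜 := ℝ)).symm GB,
    aux_psd GA (hGpos DA hDAc (fun t v => hpos (z + t • (u - z)) v)),
    aux_psd GB (hGpos DB hDBc (fun t v => hpos (z + t • (w - z)) v)),
    by rw [hsn]; exact hnormI DA (fun t => hfd _),
    by rw [hsn]; exact hnormI DB (fun t => hfd _), ?_, ?_⟩
  · -- norm of difference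
    rw [← map_sub, hsn]
    have hsub : GA - GB = ∫ t in (0:ℝ)..1, (DA t - DB t) :=
      (intervalIntegral.integral_sub hIA hIB).symm
    set c := ‖F z - F w‖ with hc
    have hbound : ∀ t ∈ Set.Ioc (0:ℝ) 1, ‖DA t - DB t‖ ≤ Λ * η * c * t := by
      intro t ht
      have h1 := hlipderiv (z + t • (u - z)) (z + t • (w - z))
      have h2 : (z + t • (u - z)) - (z + t • (w - z)) = t • (η • (F z - F w)) := by
        rw [hu, hw]
        module
      calc ‖DA t - DB t‖ ≤ Λ * ‖(z + t • (u - z)) - (z + t • (w - z))‖ := h1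
        _ = Λ * (t * (η * c)) := by
            rw [h2, norm_smul, norm_smul]
            simp [abs_of_pos ht.1, abs_of_pos hη, hc]
        _ = Λ * η * c * t := by ring
    rw [hsub]
    have hgc : Continuous fun t : ℝ => Λ * η * c * t := continuous_const.mul continuous_id
    have hgint : IntervalIntegrable (fun t : ℝ => Λ * η * c * t)
        MeasureTheory.volume 0 1 := hgc.intervalIntegrable 0 1
    have hle := intervalIntegral.norm_integral_le_of_norm_le
      (μ := MeasureTheory.volume) (a := (0:ℝ)) (b := 1)
      (f := fun t => DA t - DB t) (g := fun t => Λ * η * c * t) zero_le_one ?_ hgint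
    · have hval : (∫ t in (0:ℝ)..1, Λ * η * c * t) = Λ * η * c * (1/2) := by
        rw [intervalIntegral.integral_const_mul, integral_id]
        norm_num
      rw [hval] at hle
      calc ‖∫ t in (0:ℝ)..1, (DA t - DB t)‖ ≤ Λ * η * c * (1/2) := by simpa using hle
        _ = η * Λ / 2 * c := by ring
    · filter_upwards with t ht
      exact hbound t ht
  · -- the equation
    have hwz : w - z = -(η • F z) := by rw [hw]; abel
    have huz : u - z = -(η • F w) := by rw [hu]; abel
    have hFw : F w = F z - η • GB (F z) := by
      have h : F w = F z + GB (w - z) := aux_seg F hF z w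
      rw [h, hwz, GB.map_neg, GB.map_smul]
      abel
    have hFu : F u = F z - η • GA (F w) := by
      have h : F u = F z + GA (u - z) := aux_seg F hF z u
      rw [h, huz, GA.map_neg, GA.map_smul]
      abel
    have hexp : GA (F z - η • GB (F z)) = GA (F z) - η • GA (GB (F z)) := by
      rw [GA.map_sub, GA.map_smul]
    rw [hmApp, hmApp, hmApp, hFu, hFw, hexp, smul_sub, smul_smul, sq]
    abel
end

section
/- Fix integers k, t ≥ 1 and a real L > 0. Let r be a polynomial with real coefficients of degree at most k such that r(0) = 1. Then there exists y ∈ [L/(20tk²), L] such that y·|r(y)|^t > L/(40tk²). -/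
open Polynomial Real

private lemma my_cosh_surj {x : ℝ} (hx : 1 ≤ x) : ∃ u : ℝ, 0 ≤ u ∧ Real.cosh u = x := by
  have hs : Real.sqrt (x ^ 2 - 1) ^ 2 = x ^ 2 - 1 := Real.sq_sqrt (by nlinarith)
  have hxs : 1 ≤ x + Real.sqrt (x ^ 2 - 1) := by
    have := Real.sqrt_nonneg (x ^ 2 - 1); linarith
  refine ⟨Real.log (x + Real.sqrt (x ^ 2 - 1)), Real.log_nonneg hxs, ?_⟩
  have hpos : 0 < x + Real.sqrt (x ^ 2 - 1) := by linarith
  rw [Real.cosh_eq, Real.exp_log hpos, Real.exp_neg, Real.exp_log hpos]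
  have h1 : (x + Real.sqrt (x ^ 2 - 1)) * (x - Real.sqrt (x ^ 2 - 1)) = 1 := by nlinarith
  have h2 : (x + Real.sqrt (x ^ 2 - 1))⁻¹ = x - Real.sqrt (x ^ 2 - 1) := by
    field_simp at h1 ⊢; nlinarith
  rw [h2]; ring

private lemma my_T_cosh (n : ℕ) (u : ℝ) :
    (Polynomial.Chebyshev.T ℝ n).eval (Real.cosh u) = Real.cosh (n * u) := by
  have h := Polynomial.Chebyshev.T_complex_cos ((u : ℂ) * Complex.I) (n : ℤ)
  rw [Complex.cos_mul_I] at h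
  have h2 : ((n : ℤ) : ℂ) * ((u : ℂ) * Complex.I) = ((n * u : ℝ) : ℂ) * Complex.I := by
    push_cast; ring
  rw [h2, Complex.cos_mul_I] at h
  exact_mod_cast h

private lemma my_natDegree_T_le (n : ℕ) : (Polynomial.Chebyshev.T ℝ n).natDegree ≤ n := by
  induction n using Nat.strong_induction_on with
  | _ n ih =>
    match n with
    | 0 => simp [Polynomial.Chebyshev.T_zero]
    | 1 => simp [Polynomial.Chebyshev.T_one]
    | (m + 2) =>
      have h : ((m : ℤ) + 2) = (m : ℤ) + 2 := rfl
      have e : Polynomial.Chebyshev.T ℝ ((m + 2 : ℕ) : ℤ)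
          = 2 * Polynomial.X * Polynomial.Chebyshev.T ℝ ((m + 1 : ℕ) : ℤ)
            - Polynomial.Chebyshev.T ℝ (m : ℤ) := by
        push_cast
        exact Polynomial.Chebyshev.T_add_two ℝ (m : ℤ)
      rw [e]
      refine le_trans (Polynomial.natDegree_sub_le _ _) (max_le ?_ ?_)
      · refine le_trans (Polynomial.natDegree_mul_le) ?_
        have h1 : (2 * Polynomial.X : ℝ[X]).natDegree ≤ 1 := by
          simpa using Polynomial.natDegree_C_mul_le (2 : ℝ) Polynomial.X
        have h2 := ih (m + 1) (by omega)
        omega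
      · exact le_trans (ih m (by omega)) (by omega)

private lemma my_one_le_T_eval (n : ℕ) {x : ℝ} (hx : 1 ≤ x) :
    1 ≤ (Polynomial.Chebyshev.T ℝ n).eval x := by
  obtain ⟨u, _, rfl⟩ := my_cosh_surj hx
  rw [my_T_cosh]; exact Real.one_le_cosh _

private lemma my_sinh_le_mul_cosh {x : ℝ} (hx : 0 ≤ x) : Real.sinh x ≤ x * Real.cosh x := by
  have key : ∀ y : ℝ, HasDerivAt (fun z => z * Real.cosh z - Real.sinh z)
      (y * Real.sinh y) y := by
    intro y
    have h := ((hasDerivAt_id y).mul (Real.hasDerivAt_cosh y)).sub (Real.hasDerivAt_sinh y)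
    have : 1 * Real.cosh y + id y * Real.sinh y - Real.cosh y = y * Real.sinh y := by
      simp [id_eq]
    rwa [this] at h
  have hmono : MonotoneOn (fun z => z * Real.cosh z - Real.sinh z) (Set.Ici (0 : ℝ)) := by
    apply monotoneOn_of_deriv_nonneg (convex_Ici 0)
    · exact (Continuous.sub (continuous_id.mul Real.continuous_cosh)
        Real.continuous_sinh).continuousOn
    · intro y hy
      exact ((key y).differentiableAt).differentiableWithinAt
    · intro y hy
      rw [(key y).deriv]
      have hy' : 0 < y := by rwa [interior_Ici, Set.mem_Ioi] at hy
      have : (0:ℝ) ≤ Real.sinh y := le_trans hy'.le (Real.self_le_sinh_iff.mpr hy'.le)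
      exact mul_nonneg hy'.le this
  have h0 := hmono (Set.self_mem_Ici) (Set.mem_Ici.mpr hx) hx
  simp at h0
  linarith

private lemma my_one_add_sq_div_two_le_cosh (x : ℝ) : 1 + x ^ 2 / 2 ≤ Real.cosh x := by
  rw [← Real.cosh_abs, ← sq_abs]
  set y := |x| with hy
  have h0 : 0 ≤ y := abs_nonneg x
  have h1 : Real.cosh y = 1 + 2 * Real.sinh (y / 2) ^ 2 := by
    have h2 : Real.cosh (2 * (y / 2)) = Real.cosh (y/2) ^ 2 + Real.sinh (y/2) ^ 2 :=
      Real.cosh_two_mul _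
    have h3 : (2 : ℝ) * (y / 2) = y := by ring
    rw [h3] at h2
    rw [h2, Real.cosh_sq]; ring
  have h4 : y / 2 ≤ Real.sinh (y / 2) := Real.self_le_sinh_iff.mpr (by linarith)
  nlinarith [h4]

private lemma my_cosh_le_one_add_sq {x : ℝ} (h0 : 0 ≤ x) (h1 : x ≤ 1) :
    Real.cosh x ≤ 1 + x ^ 2 := by
  have hs : Real.sinh (x / 2) ≤ (x / 2) * Real.cosh (x / 2) := my_sinh_le_mul_cosh (by linarith)
  have hc2 : Real.cosh (x / 2) ^ 2 = (1 + Real.cosh x) / 2 := by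
    have h2 : Real.cosh (2 * (x / 2)) = 2 * Real.cosh (x/2) ^ 2 - 1 := by
      rw [Real.cosh_two_mul, Real.cosh_sq]; ring
    have h3 : (2 : ℝ) * (x / 2) = x := by ring
    rw [h3] at h2; linarith
  have hs2 : Real.sinh (x / 2) ^ 2 = (Real.cosh x - 1) / 2 := by
    have := Real.cosh_sq (x / 2)
    rw [hc2] at this; linarith
  have hsn : 0 ≤ Real.sinh (x / 2) := le_trans (by linarith) (Real.self_le_sinh_iff.mpr (by linarith))
  have key : (Real.cosh x - 1) / 2 ≤ (x / 2) ^ 2 * ((1 + Real.cosh x) / 2) := by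
    rw [← hs2, ← hc2]
    calc Real.sinh (x/2) ^ 2 ≤ ((x/2) * Real.cosh (x/2)) ^ 2 := by
          apply sq_le_sq' <;> nlinarith
      _ = (x/2)^2 * Real.cosh (x/2)^2 := by ring
  have hC : 1 ≤ Real.cosh x := Real.one_le_cosh x
  have ht0 : 0 ≤ x^2 := sq_nonneg x
  have ht1 : x^2 ≤ 1 := by nlinarith
  have key2 : 4*(Real.cosh x - 1) ≤ x^2*(1 + Real.cosh x) := by nlinarith [key]
  nlinarith [key2, ht1, ht0, hC, mul_nonneg ht0 (by linarith : (0:ℝ) ≤ 2 - x^2)]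

private lemma my_cos_nat_pi (j : ℕ) : Real.cos (j * π) = (-1 : ℝ) ^ j := by
  have := Real.cos_nat_mul_pi_sub 0 j
  simpa using this

private lemma my_key_ineq {L S : ℝ} (hL : 0 < L) (hS : 1 ≤ S) :
    L + L/(20*S) ≤ (1 + 1/(9*S)) * (L - L/(20*S)) := by
  have hS0 : (0:ℝ) < S := by linarith
  have expand : (1 + 1/(9*S)) * (L - L/(20*S)) - (L + L/(20*S)) = L*(2*S-1)/(180*S^2) := by
    field_simp
    ring
  have hnn : (0:ℝ) ≤ L*(2*S-1)/(180*S^2) :=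
    div_nonneg (mul_nonneg hL.le (by linarith)) (by positivity)
  linarith

private lemma my_sign_lemma {a b : ℝ} (h : |a| < |b|) : 0 < (b - a) * b := by
  have h1 : a * b ≤ |a| * |b| := le_trans (le_abs_self _) (by rw [abs_mul])
  nlinarith [abs_nonneg a, abs_nonneg b, sq_abs b, sq_abs a]

private lemma cheb_growth {k : ℕ} (hk : 1 ≤ k) (p : Polynomial ℝ) (hdeg : p.natDegree ≤ k)
    {M x : ℝ} (hM : ∀ y : ℝ, |y| ≤ 1 → |p.eval y| ≤ M) (hx : 1 < x) :
    |p.eval x| ≤ M * (Polynomial.Chebyshev.T ℝ k).eval x := by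
  by_contra hcon
  push_neg at hcon
  have hkR : (0:ℝ) < (k:ℝ) := by exact_mod_cast hk
  set Tx := (Polynomial.Chebyshev.T ℝ k).eval x with hTxdef
  have hTx1 : 1 ≤ Tx := my_one_le_T_eval k hx.le
  have hM0 : 0 ≤ M := le_trans (abs_nonneg _) (hM 0 (by norm_num))
  set e := p.eval x with he
  have he0 : M * Tx < |e| := hcon
  have hene : e ≠ 0 := by
    intro h
    rw [h] at he0
    simp at he0
    nlinarith
  set q : Polynomial ℝ := Polynomial.C e * Polynomial.Chebyshev.T ℝ k - Polynomial.C Tx * p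
    with hq
  have hqdeg : q.natDegree ≤ k := by
    refine le_trans (Polynomial.natDegree_sub_le _ _) (max_le ?_ ?_)
    · exact le_trans (Polynomial.natDegree_C_mul_le _ _) (my_natDegree_T_le k)
    · exact le_trans (Polynomial.natDegree_C_mul_le _ _) hdeg
  set n : ℕ → ℝ := fun j => Real.cos (j * Real.pi / k) with hn
  have hn_abs : ∀ j, |n j| ≤ 1 := fun j => Real.abs_cos_le_one _
  have hTn : ∀ j : ℕ, (Polynomial.Chebyshev.T ℝ k).eval (n j) = (-1 : ℝ) ^ j := by
    intro j
    have harg : (((k:ℤ)):ℝ) * ((j : ℝ) * Real.pi / k) = (j : ℝ) * Real.pi := by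
      push_cast
      field_simp
    rw [hn]
    simp only []
    rw [show ((j:ℝ) * Real.pi / k) = ((j:ℝ) * Real.pi / k) from rfl]
    rw [Polynomial.Chebyshev.T_real_cos ((j : ℝ) * Real.pi / k) (k : ℤ), harg, my_cos_nat_pi]
  have hq_eval : ∀ j : ℕ, q.eval (n j) = e * (-1:ℝ)^j - Tx * p.eval (n j) := by
    intro j
    rw [hq]
    simp [hTn j]
  have hsign : ∀ j : ℕ, 0 < q.eval (n j) * (e * (-1:ℝ)^j) := by
    intro j
    have h1 : |Tx * p.eval (n j)| < |e * (-1:ℝ)^j| := by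
      rw [abs_mul, abs_mul, abs_pow, abs_neg, abs_one, one_pow, mul_one]
      calc |Tx| * |p.eval (n j)| = Tx * |p.eval (n j)| := by
            rw [abs_of_nonneg (by linarith : (0:ℝ) ≤ Tx)]
        _ ≤ Tx * M := by
            exact mul_le_mul_of_nonneg_left (hM _ (hn_abs j)) (by linarith)
        _ = M * Tx := mul_comm _ _
        _ < |e| := he0
    have := my_sign_lemma h1
    rwa [← hq_eval j] at this
  have hmono : ∀ a b : ℕ, a < b → b ≤ k → n b < n a := by
    intro a b hab hbk
    apply Real.cos_lt_cos_of_nonneg_of_le_pi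
    · positivity
    · rw [div_le_iff₀ hkR]
      have : (b : ℝ) ≤ (k : ℝ) := by exact_mod_cast hbk
      nlinarith [Real.pi_pos]
    · rw [div_lt_div_iff₀ hkR hkR]
      have h1 : (a : ℝ) < (b : ℝ) := by exact_mod_cast hab
      have h2 := mul_lt_mul_of_pos_right h1 Real.pi_pos
      exact mul_lt_mul_of_pos_right h2 hkR
  have hroots : ∀ j : Fin k, ∃ z ∈ Set.Ioo (n ((j:ℕ)+1)) (n (j:ℕ)), q.eval z = 0 := by
    intro j
    have hjk : (j:ℕ) < k := j.isLt
    have hlt : n ((j:ℕ)+1) < n (j:ℕ) := hmono _ _ (Nat.lt_succ_self _) (by omega)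
    have hprod : q.eval (n (j:ℕ)) * q.eval (n ((j:ℕ)+1)) < 0 := by
      have h1 := hsign (j:ℕ)
      have h2 := hsign ((j:ℕ)+1)
      have hs : ((-1:ℝ))^((j:ℕ)+1) = -((-1:ℝ))^(j:ℕ) := by rw [pow_succ]; ring
      rw [hs] at h2
      have hkey : (q.eval (n (j:ℕ)) * (e * (-1:ℝ)^(j:ℕ)))
          * (q.eval (n ((j:ℕ)+1)) * (e * -((-1:ℝ))^(j:ℕ)))
          = -(q.eval (n (j:ℕ)) * q.eval (n ((j:ℕ)+1))) * (e * (-1:ℝ)^(j:ℕ))^2 := by ring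
      have hpos := mul_pos h1 h2
      rw [hkey] at hpos
      have hB : 0 < (e * (-1:ℝ)^(j:ℕ))^2 := by positivity
      nlinarith
    have hcont : ContinuousOn (fun z => q.eval z) (Set.Icc (n ((j:ℕ)+1)) (n (j:ℕ))) :=
      (Polynomial.continuous q).continuousOn
    rcases mul_neg_iff.mp hprod with ⟨ha, hb⟩ | ⟨ha, hb⟩
    · -- q (n j) > 0, q (n (j+1)) < 0 : increasing case
      have h0 : (0:ℝ) ∈ Set.Ioo (q.eval (n ((j:ℕ)+1))) (q.eval (n (j:ℕ))) := ⟨hb, ha⟩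
      obtain ⟨z, hz, hz0⟩ := intermediate_value_Ioo hlt.le hcont h0
      exact ⟨z, hz, hz0⟩
    · have h0 : (0:ℝ) ∈ Set.Ioo (q.eval (n (j:ℕ))) (q.eval (n ((j:ℕ)+1))) := ⟨ha, hb⟩
      obtain ⟨z, hz, hz0⟩ := intermediate_value_Ioo' hlt.le hcont h0
      exact ⟨z, hz, hz0⟩
  choose z hzmem hzzero using hroots
  set g : Fin (k+1) → ℝ := Fin.cases x z with hg
  have hg0 : g 0 = x := rfl
  have hgs : ∀ i : Fin k, g i.succ = z i := fun i => rfl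
  have hzlt1 : ∀ i : Fin k, z i < 1 := by
    intro i
    have h1 := (hzmem i).2
    have h2 : n (i:ℕ) ≤ 1 := by
      rw [hn]
      exact Real.cos_le_one _
    linarith
  have hganti : ∀ i j : Fin (k+1), i < j → g j < g i := by
    intro i j hij
    have hjne : j ≠ 0 := by
      intro h
      rw [h] at hij
      exact absurd hij (by simp)
    obtain ⟨j', rfl⟩ := Fin.eq_succ_of_ne_zero hjne
    rw [hgs]
    rcases Fin.eq_zero_or_eq_succ i with rfl | ⟨i', rfl⟩
    · rw [hg0]
      exact lt_trans (hzlt1 j') hx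
    · rw [hgs]
      have hij' : (i':ℕ) < (j':ℕ) := Fin.succ_lt_succ_iff.mp hij
      have c1 : z j' < n (j':ℕ) := (hzmem j').2
      have c2 : n (j':ℕ) ≤ n ((i':ℕ)+1) := by
        rcases eq_or_lt_of_le (Nat.succ_le_of_lt hij') with h | h
        · rw [← h]
        · exact (hmono _ _ h (le_of_lt j'.isLt)).le
      have c3 : n ((i':ℕ)+1) < z i' := (hzmem i').1
      linarith
  have hginj : Function.Injective g := by
    intro a b hab
    by_contra hne
    rcases lt_or_gt_of_ne hne with h | h
    · exact (hganti a b h).ne' hab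
    · exact (hganti b a h).ne hab
  have hgzero : ∀ i : Fin (k+1), q.eval (g i) = 0 := by
    intro i
    rcases Fin.eq_zero_or_eq_succ i with rfl | ⟨i', rfl⟩
    · rw [hg0, hq]
      simp only [Polynomial.eval_sub, Polynomial.eval_mul, Polynomial.eval_C]
      rw [← hTxdef, ← he]
      ring
    · rw [hgs]
      exact hzzero i'
  have hq0 : q = 0 := by
    apply Polynomial.eq_zero_of_natDegree_lt_card_of_eval_eq_zero q hginj hgzero
    rw [Fintype.card_fin]
    omega
  have hcontra := hsign 0
  rw [hq0] at hcontra
  simp at hcontra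

set_option maxHeartbeats 1000000 in
/-- For any real polynomial `r` of degree at most `k` with `r(0) = 1`, there exists
`y ∈ [L/(20 t k²), L]` with `y · |r(y)|^t > L/(40 t k²)`. -/
theorem poly_lower_bound (k t : ℕ) (hk : 1 ≤ k) (ht : 1 ≤ t) (L : ℝ) (hL : 0 < L)
    (r : Polynomial ℝ) (hdeg : r.natDegree ≤ k) (h0 : r.eval 0 = 1) :
    ∃ y : ℝ, y ∈ Set.Icc (L / (20 * t * k ^ 2)) L ∧
      L / (40 * t * k ^ 2) < y * |r.eval y| ^ t := by
  by_contra hcon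
  push_neg at hcon
  have hK1 : (1:ℝ) ≤ (k:ℝ) := by exact_mod_cast hk
  have hT1 : (1:ℝ) ≤ (t:ℝ) := by exact_mod_cast ht
  have hK0 : (0:ℝ) < (k:ℝ) := by linarith
  have hT0 : (0:ℝ) < (t:ℝ) := by linarith
  set c : ℝ := L / (20 * (t:ℝ) * (k:ℝ) ^ 2) with hc
  have hD1 : (1:ℝ) < 20 * (t:ℝ) * (k:ℝ) ^ 2 := by nlinarith
  have hD0 : (0:ℝ) < 20 * (t:ℝ) * (k:ℝ) ^ 2 := by linarith
  have hc0 : 0 < c := div_pos hL hD0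
  have hcL : c < L := by rw [hc]; exact div_lt_self hL hD1
  have hLc : 0 < L - c := by linarith
  have hhalf : L / (40 * (t:ℝ) * (k:ℝ) ^ 2) = c / 2 := by
    rw [hc, div_div]
    congr 1
    ring
  have hcon' : ∀ y, y ∈ Set.Icc c L → y * |r.eval y| ^ t ≤ c / 2 := by
    intro y hy
    have h := hcon y hy
    rwa [hhalf] at h
  have hrle : ∀ y, y ∈ Set.Icc c L → |r.eval y| ^ t ≤ 1/2 := by
    intro y hy
    have h1 := hcon' y hy
    have hyc := hy.1
    have hP : (0:ℝ) ≤ |r.eval y| ^ t := by positivity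
    nlinarith
  obtain ⟨M, hM⟩ : ∃ M : ℝ, M = (1/2 : ℝ) ^ ((t:ℝ)⁻¹) := ⟨_, rfl⟩
  have hM0 : 0 < M := by rw [hM]; exact Real.rpow_pos_of_pos (by norm_num) _
  have hrM : ∀ y, y ∈ Set.Icc c L → |r.eval y| ≤ M := by
    intro y hy
    have h1 := hrle y hy
    have ha : (0:ℝ) ≤ |r.eval y| := abs_nonneg _
    have h2 : (|r.eval y| ^ t : ℝ) = |r.eval y| ^ ((t:ℕ):ℝ) :=
      (Real.rpow_natCast _ t).symm
    have h3 : |r.eval y| = (|r.eval y| ^ (((t:ℕ)):ℝ)) ^ ((t:ℝ)⁻¹) := by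
      rw [← Real.rpow_mul ha, mul_inv_cancel₀ (ne_of_gt hT0), Real.rpow_one]
    rw [h3, hM]
    apply Real.rpow_le_rpow (by positivity) ?_ (inv_nonneg.mpr hT0.le)
    rw [← h2]
    exact h1
  obtain ⟨A, hA⟩ : ∃ A : ℝ, A = (L + c)/2 := ⟨_, rfl⟩
  obtain ⟨B, hB⟩ : ∃ B : ℝ, B = (L - c)/2 := ⟨_, rfl⟩
  have hB0 : 0 < B := by rw [hB]; linarith
  have hAB1 : A - B = c := by rw [hA, hB]; ring
  have hAB2 : A + B = L := by rw [hA, hB]; ring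
  obtain ⟨p, hp⟩ : ∃ p : Polynomial ℝ, p = r.comp (Polynomial.C A - Polynomial.C B * Polynomial.X) := ⟨_, rfl⟩
  have hpeval : ∀ y : ℝ, p.eval y = r.eval (A - B * y) := by
    intro y; rw [hp]; simp [Polynomial.eval_comp]
  have hpdeg : p.natDegree ≤ k := by
    rw [hp]
    refine le_trans Polynomial.natDegree_comp_le ?_
    have hlin : (Polynomial.C A - Polynomial.C B * Polynomial.X : Polynomial ℝ).natDegree ≤ 1 := by
      have he : (Polynomial.C A - Polynomial.C B * Polynomial.X : Polynomial ℝ)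
          = Polynomial.C (-B) * Polynomial.X + Polynomial.C A := by
        rw [map_neg]; ring
      rw [he]; exact Polynomial.natDegree_linear_le
    calc r.natDegree * (Polynomial.C A - Polynomial.C B * Polynomial.X : Polynomial ℝ).natDegree
        ≤ k * 1 := Nat.mul_le_mul hdeg hlin
      _ = k := mul_one k
  obtain ⟨x₀, hx₀def⟩ : ∃ x : ℝ, x = (L + c)/(L - c) := ⟨_, rfl⟩
  have hx₀ : 1 < x₀ := by rw [hx₀def, lt_div_iff₀ hLc]; linarith
  have hpx₀ : p.eval x₀ = 1 := by
    rw [hpeval]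
    have hz : A - B * x₀ = 0 := by
      rw [hA, hB, hx₀def]
      field_simp [hLc.ne']
      ring
    rw [hz, h0]
  have hMb : ∀ y : ℝ, |y| ≤ 1 → |p.eval y| ≤ M := by
    intro y hy
    rw [hpeval]
    apply hrM
    obtain ⟨hy1, hy2⟩ := abs_le.mp hy
    constructor
    · nlinarith
    · nlinarith
  have hgrow := cheb_growth hk p hpdeg hMb hx₀
  rw [hpx₀, abs_one] at hgrow
  obtain ⟨Tx, hTx⟩ : ∃ T : ℝ, T = (Polynomial.Chebyshev.T ℝ k).eval x₀ := ⟨_, rfl⟩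
  rw [← hTx] at hgrow
  have hTx1 : 1 ≤ Tx := by rw [hTx]; exact my_one_le_T_eval k hx₀.le
  have h2 : (2:ℝ) ≤ Tx ^ t := by
    have h1 : (1:ℝ) ≤ (M * Tx)^t := by
      have h := pow_le_pow_left₀ (zero_le_one) hgrow t
      rwa [one_pow] at h
    rw [mul_pow] at h1
    have hMt : M ^ t = 1/2 := by
      rw [hM, ← Real.rpow_natCast ((1/2:ℝ) ^ ((t:ℝ)⁻¹)) t]
      rw [← Real.rpow_mul (by norm_num : (0:ℝ) ≤ 1/2)]
      rw [inv_mul_cancel₀ (ne_of_gt hT0), Real.rpow_one]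
    rw [hMt] at h1
    linarith
  obtain ⟨u, hu0, hcu⟩ := my_cosh_surj hx₀.le
  have hTxc : Tx = Real.cosh ((k:ℝ) * u) := by rw [hTx, ← hcu, my_T_cosh]
  obtain ⟨w, hw⟩ : ∃ w : ℝ, w = Real.sqrt (2/(9*(t:ℝ))) / (k:ℝ) := ⟨_, rfl⟩
  have hw0 : 0 ≤ w := by rw [hw]; exact div_nonneg (Real.sqrt_nonneg _) hK0.le
  have hwsq : w^2 = 2/(9*(t:ℝ))/(k:ℝ)^2 := by
    rw [hw, div_pow, Real.sq_sqrt (by positivity)]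
  have hx₀w : x₀ ≤ 1 + w^2/2 := by
    have hk2 : (1:ℝ) ≤ (k:ℝ)^2 := by
      rw [← one_pow 2]
      exact pow_le_pow_left₀ zero_le_one hK1 2
    have hS1 : (1:ℝ) ≤ (t:ℝ) * (k:ℝ)^2 := by
      calc (1:ℝ) = 1 * 1 := by norm_num
        _ ≤ (t:ℝ) * (k:ℝ)^2 := mul_le_mul hT1 hk2 zero_le_one hT0.le
    have hS0 : (0:ℝ) < (t:ℝ) * (k:ℝ)^2 := by linarith
    rw [hwsq, hx₀def, div_le_iff₀ hLc]
    have e1 : 1 + 2/(9*(t:ℝ))/(k:ℝ)^2/2 = 1 + 1/(9*((t:ℝ) * (k:ℝ)^2)) := by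
      rw [div_div, div_div]
      congr 1
      rw [div_eq_div_iff (by positivity) (by positivity)]
      ring
    have e2 : c = L/(20*((t:ℝ) * (k:ℝ)^2)) := by
      rw [hc]
      congr 1
      ring
    rw [e1, e2]
    exact my_key_ineq hL hS1
  have hcoshw : x₀ ≤ Real.cosh w := le_trans hx₀w (my_one_add_sq_div_two_le_cosh w)
  have huw : u ≤ w := by
    have hcc : Real.cosh u ≤ Real.cosh w := by rw [hcu]; exact hcoshw
    have h := Real.cosh_le_cosh.mp hcc
    rwa [abs_of_nonneg hu0, abs_of_nonneg hw0] at h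
  obtain ⟨v, hv⟩ : ∃ v : ℝ, v = Real.sqrt (2/(9*(t:ℝ))) := ⟨_, rfl⟩
  have hv0 : 0 ≤ v := by rw [hv]; exact Real.sqrt_nonneg _
  have hvsq : v^2 = 2/(9*(t:ℝ)) := by rw [hv]; exact Real.sq_sqrt (by positivity)
  have hv1 : v ≤ 1 := by
    rw [hv]
    apply Real.sqrt_le_one.mpr
    rw [div_le_one (by positivity)]
    linarith
  have hKw : (k:ℝ) * w = v := by
    rw [hw, hv, mul_comm, div_mul_cancel₀ _ hK0.ne']
  have hkuv : (k:ℝ) * u ≤ v := by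
    rw [← hKw]
    exact mul_le_mul_of_nonneg_left huw hK0.le
  have hTxle : Tx ≤ 1 + v^2 := by
    rw [hTxc]
    have h1 : Real.cosh ((k:ℝ) * u) ≤ Real.cosh v := by
      apply Real.cosh_le_cosh.mpr
      rwa [abs_of_nonneg (mul_nonneg hK0.le hu0), abs_of_nonneg hv0]
    exact le_trans h1 (my_cosh_le_one_add_sq hv0 hv1)
  have hTxt : Tx ^ t ≤ Real.exp (2/9) := by
    calc Tx ^ t ≤ (1 + v^2) ^ t := pow_le_pow_left₀ (by linarith) hTxle t
      _ ≤ (Real.exp (2/(9*(t:ℝ)))) ^ t := by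
          apply pow_le_pow_left₀ (by positivity)
          rw [hvsq]
          have := Real.add_one_le_exp (2/(9*(t:ℝ)))
          linarith
      _ = Real.exp ((t:ℕ) * (2/(9*(t:ℝ)))) := by rw [Real.exp_nat_mul]
      _ = Real.exp (2/9) := by
          congr 1
          field_simp
  have hfin : Real.exp (2/9) < 2 := by
    have h1 : (2:ℝ)/9 < Real.log 2 := by
      have hlog := Real.log_two_gt_d9
      norm_num at hlog ⊢
      linarith
    calc Real.exp (2/9) < Real.exp (Real.log 2) := Real.exp_lt_exp.mpr h1
      _ = 2 := Real.exp_log (by norm_num)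
  linarith
end

section
/- Fix an integer k ≥ 1 and reals L > μ > 0 such that k ≤ √(L/μ) − 1. Let r be a polynomial with real coefficients of degree at most k such that r(0) = 1. Then there exists y ∈ [μ, L] such that |r(y)| > 1 − 6k²/(√(L/μ) − 1)². -/
open Polynomial Finset

lemma aux_natDegree_T_le : ∀ n : ℕ, (Polynomial.Chebyshev.T ℝ (n : ℤ)).natDegree ≤ n := by
  have key : ∀ n : ℕ, (Polynomial.Chebyshev.T ℝ (n : ℤ)).natDegree ≤ n ∧
      (Polynomial.Chebyshev.T ℝ ((n : ℤ) + 1)).natDegree ≤ n + 1 := by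
    intro n
    induction n with
    | zero =>
      constructor
      · simp [Polynomial.Chebyshev.T_zero]
      · simpa [Polynomial.Chebyshev.T_one] using Polynomial.natDegree_X_le
    | succ n ih =>
      refine ⟨by exact_mod_cast ih.2, ?_⟩
      have hcast : (((n + 1 : ℕ)) : ℤ) + 1 = (n : ℤ) + 2 := by push_cast; ring
      rw [hcast, Polynomial.Chebyshev.T_add_two]
      refine le_trans (Polynomial.natDegree_sub_le _ _)
        (max_le ?_ (le_trans ih.1 (by omega)))
      refine le_trans Polynomial.natDegree_mul_le ?_
      have h2 : (2 * X : ℝ[X]).natDegree ≤ 1 :=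
        le_trans Polynomial.natDegree_mul_le (by simpa using Polynomial.natDegree_X_le)
      have h3 := ih.2
      omega
  intro n; exact (key n).1

lemma aux_T_real_cosh (n : ℕ) (t : ℝ) :
    (Polynomial.Chebyshev.T ℝ (n : ℤ)).eval (Real.cosh t) = Real.cosh (n * t) := by
  apply Complex.ofReal_injective
  rw [Polynomial.Chebyshev.complex_ofReal_eval_T]
  have h1 : ((Real.cosh t : ℝ) : ℂ) = Complex.cos (t * Complex.I) := by
    rw [Complex.cos_mul_I, Complex.ofReal_cosh]
  rw [h1, Polynomial.Chebyshev.T_complex_cos]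
  have h2 : ((n : ℤ) : ℂ) * ((t : ℂ) * Complex.I) = ((n * t : ℝ) : ℂ) * Complex.I := by
    push_cast; ring
  rw [h2, Complex.cos_mul_I, Complex.ofReal_cosh]

lemma aux_sinh_le (u : ℝ) (hu : 0 ≤ u) : Real.sinh u ≤ u * Real.exp u := by
  have he : (-(2 * u)) + 1 ≤ Real.exp (-(2 * u)) := Real.add_one_le_exp _
  have h2 : Real.exp (-(2 * u)) = Real.exp (-u) * Real.exp (-u) := by
    rw [← Real.exp_add]; ring_nf
  have h3 : Real.exp (-u) * Real.exp u = 1 := by rw [← Real.exp_add]; simp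
  have h4 : 0 < Real.exp u := Real.exp_pos u
  have h5 : 0 < Real.exp (-u) := Real.exp_pos _
  rw [Real.sinh_eq]
  nlinarith [he, h2, h3, h4, h5]

lemma aux_cosh_bound (x : ℝ) (hx : 0 ≤ x) : Real.cosh x - 1 ≤ x ^ 2 * Real.cosh x := by
  have hu : (0 : ℝ) ≤ x / 2 := by positivity
  have hhalf : Real.cosh x = 2 * Real.sinh (x / 2) ^ 2 + 1 := by
    have h1 : Real.cosh (2 * (x / 2)) = Real.cosh (x / 2) ^ 2 + Real.sinh (x / 2) ^ 2 :=
      Real.cosh_two_mul _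
    have h2 : Real.cosh (x / 2) ^ 2 = Real.sinh (x / 2) ^ 2 + 1 := Real.cosh_sq _
    have h3 : 2 * (x / 2) = x := by ring
    rw [h3] at h1; linarith
  have hsinh : Real.sinh (x / 2) ≤ (x / 2) * Real.exp (x / 2) := aux_sinh_le _ hu
  have hsnn : 0 ≤ Real.sinh (x / 2) := by
    rw [Real.sinh_eq]
    have := Real.exp_le_exp.mpr (by linarith : -(x / 2) ≤ x / 2)
    linarith
  have hexp2 : Real.exp (x / 2) * Real.exp (x / 2) = Real.exp x := by
    rw [← Real.exp_add]; ring_nf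
  have hexple : Real.exp x ≤ 2 * Real.cosh x := by
    rw [Real.cosh_eq]; have := Real.exp_pos (-x); linarith
  have hsq : Real.sinh (x / 2) ^ 2 ≤ (x / 2) ^ 2 * Real.exp x := by
    have hmul := mul_le_mul hsinh hsinh hsnn (by positivity)
    nlinarith [hmul, hexp2]
  nlinarith [hsq, hexple, Real.exp_pos x]

set_option maxHeartbeats 2000000 in
/-- For any real polynomial `r` of degree at most `k` with `r(0) = 1`, and `0 < μ < L` with
`k ≤ √(L/μ) − 1`, there exists `y ∈ [μ, L]` with `|r(y)| > 1 − 6k²/(√(L/μ) − 1)²`. -/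
theorem poly_chebyshev_lower_bound (k : ℕ) (hk : 1 ≤ k) (L μ : ℝ) (hμ : 0 < μ) (hμL : μ < L)
    (hkcond : (k : ℝ) ≤ Real.sqrt (L / μ) - 1)
    (r : Polynomial ℝ) (hdeg : r.natDegree ≤ k) (h0 : r.eval 0 = 1) :
    ∃ y : ℝ, y ∈ Set.Icc μ L ∧
      1 - 6 * k ^ 2 / (Real.sqrt (L / μ) - 1) ^ 2 < |r.eval y| := by
  by_contra hcon
  push_neg at hcon
  set s0 := Real.sqrt (L / μ) with hs0def
  have hk1 : (1 : ℝ) ≤ (k : ℝ) := by exact_mod_cast hk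
  have hkpos : (0 : ℝ) < (k : ℝ) := by linarith
  have hs02 : (2 : ℝ) ≤ s0 := by linarith
  have hs01 : (1 : ℝ) < s0 := by linarith
  have hLμpos : 0 < L / μ := div_pos (by linarith) hμ
  have hs0sq : s0 ^ 2 = L / μ := Real.sq_sqrt (le_of_lt hLμpos)
  set t := Real.log ((s0 + 1) / (s0 - 1)) with htdef
  have hratpos : 0 < (s0 + 1) / (s0 - 1) := by
    apply div_pos <;> linarith
  have hexp : Real.exp t = (s0 + 1) / (s0 - 1) := Real.exp_log hratpos
  have ht0 : 0 < t := by
    apply Real.log_pos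
    rw [lt_div_iff₀ (by linarith)]; linarith
  have htle : t ≤ 2 / (s0 - 1) := by
    have h := Real.log_le_sub_one_of_pos hratpos
    have hne : s0 - 1 ≠ 0 := by intro hz; rw [sub_eq_zero] at hz; linarith
    have heq : (s0 + 1) / (s0 - 1) - 1 = 2 / (s0 - 1) := by
      field_simp
      norm_num
    rw [heq] at h
    exact h
  set τ := Real.cosh t with hτdef
  have hτeq : τ = (L + μ) / (L - μ) := by
    have hexpneg : Real.exp (-t) = (s0 - 1) / (s0 + 1) := by
      rw [Real.exp_neg, hexp, inv_div]
    have h1 : s0 - 1 ≠ 0 := by intro hz; rw [sub_eq_zero] at hz; linarith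
    have h2 : s0 + 1 ≠ 0 := by positivity
    have h3 : s0 ^ 2 - 1 ≠ 0 := by nlinarith
    rw [hτdef, Real.cosh_eq, hexp, hexpneg]
    have hstep : ((s0 + 1) / (s0 - 1) + (s0 - 1) / (s0 + 1)) / 2
        = (s0 ^ 2 + 1) / (s0 ^ 2 - 1) := by
      field_simp
      ring
    rw [hstep, hs0sq]
    have hμne : μ ≠ 0 := ne_of_gt hμ
    have hLμne : L - μ ≠ 0 := by intro hz; rw [sub_eq_zero] at hz; linarith
    have hd : L / μ - 1 ≠ 0 := by
      have hgt : 1 < L / μ := (one_lt_div hμ).mpr hμL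
      intro hz; rw [sub_eq_zero] at hz; rw [← hz] at hgt; linarith
    field_simp
  have hτ1 : 1 < τ := by
    rw [hτeq, lt_div_iff₀ (by linarith)]; linarith
  -- affine map sending [-1,1] to [μ,L] and τ to 0
  set b := (L - μ) / 2 with hbdef
  set a := (L + μ) / 2 with hadef
  have hb : 0 < b := by rw [hbdef]; linarith
  have hab0 : a - b * τ = 0 := by
    have hLμne : L - μ ≠ 0 := by intro hz; rw [sub_eq_zero] at hz; linarith
    rw [hτeq, hadef, hbdef]
    field_simp
    ring
  -- Chebyshev nodes
  set v : ℕ → ℝ := fun j => Real.cos (j * Real.pi / k) with hvdef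
  have hvmem : ∀ j, -1 ≤ v j ∧ v j ≤ 1 := fun j => ⟨Real.neg_one_le_cos _, Real.cos_le_one _⟩
  have hvlt : ∀ {i j : ℕ}, j ≤ k → i < j → v j < v i := by
    intro i j hjk hij
    apply Real.cos_lt_cos_of_nonneg_of_le_pi
    · positivity
    · rw [div_le_iff₀ hkpos]
      have hjr : (j : ℝ) ≤ (k : ℝ) := by exact_mod_cast hjk
      nlinarith [Real.pi_pos]
    · have hij' : (i : ℝ) < (j : ℝ) := by exact_mod_cast hij
      have hπ := Real.pi_pos
      have : (i : ℝ) * Real.pi < (j : ℝ) * Real.pi := by nlinarith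
      exact div_lt_div_of_pos_right this hkpos
  have hinj : Set.InjOn v ↑(range (k + 1)) := by
    intro i hi j hj hij
    simp only [coe_range, Set.mem_Iio] at hi hj
    by_contra hne
    rcases lt_or_gt_of_ne hne with h | h
    · exact absurd hij (ne_of_gt (hvlt (by omega) h))
    · exact absurd hij (ne_of_lt (hvlt (by omega) h))
  have hyy : ∀ j : ℕ, a - b * v j ∈ Set.Icc μ L := by
    intro j
    obtain ⟨h1, h2⟩ := hvmem j
    constructor
    · rw [hadef, hbdef]; nlinarith
    · rw [hadef, hbdef]; nlinarith
  -- the composed polynomial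
  set p := r.comp (C (-b) * X + C a) with hpdef
  have hpdeg : p.natDegree ≤ k := by
    rw [hpdef, Polynomial.natDegree_comp]
    have hlin : (C (-b) * X + C a).natDegree = 1 :=
      Polynomial.natDegree_linear (neg_ne_zero.mpr (ne_of_gt hb))
    rw [hlin, mul_one]; exact hdeg
  have hpeval : ∀ x : ℝ, p.eval x = r.eval (a - b * x) := by
    intro x
    rw [hpdef, Polynomial.eval_comp]
    congr 1
    simp only [Polynomial.eval_add, Polynomial.eval_mul, Polynomial.eval_C, Polynomial.eval_X,
      Polynomial.eval_neg]
    ring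
  -- Lagrange interpolation at the nodes
  set ℓ : ℕ → ℝ := fun j => (Lagrange.basis (range (k + 1)) v j).eval τ with hℓdef
  have hinterp : ∀ f : ℝ[X], f.natDegree ≤ k →
      f.eval τ = ∑ j ∈ range (k + 1), f.eval (v j) * ℓ j := by
    intro f hf
    have hdlt : f.degree < (#(range (k + 1)) : WithBot ℕ) := by
      rw [card_range]
      refine lt_of_le_of_lt Polynomial.degree_le_natDegree ?_
      exact_mod_cast Nat.lt_succ_of_le hf
    have hfi := congrArg (fun q : ℝ[X] => q.eval τ) (Lagrange.eq_interpolate hinj hdlt)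
    simp only [Lagrange.interpolate_apply, Polynomial.eval_finset_sum, Polynomial.eval_mul,
      Polynomial.eval_C] at hfi
    simp only [hℓdef]
    exact hfi
  have hτv : ∀ j : ℕ, v j < τ := fun j => lt_of_le_of_lt (hvmem j).2 hτ1
  -- sign of the ℓ's
  have hsign : ∀ j ∈ range (k + 1), |ℓ j| = (-1 : ℝ) ^ j * ℓ j := by
    intro j hj
    rw [mem_range] at hj
    have hjk : j ≤ k := by omega
    have heval : ℓ j = ∏ i ∈ (range (k + 1)).erase j, ((v j - v i)⁻¹ * (τ - v i)) := by
      rw [hℓdef]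
      simp only [Lagrange.basis, Lagrange.basisDivisor, Polynomial.eval_prod,
        Polynomial.eval_mul, Polynomial.eval_C, Polynomial.eval_sub, Polynomial.eval_X]
    have hsplit : (range (k + 1)).erase j = range j ∪ Ico (j + 1) (k + 1) := by
      ext i
      simp only [mem_erase, mem_range, mem_union, mem_Ico]
      omega
    have hdisj : Disjoint (range j) (Ico (j + 1) (k + 1)) := by
      simp only [disjoint_left, mem_range, mem_Ico]
      omega
    have hprod : ℓ j = (∏ i ∈ range j, ((v j - v i)⁻¹ * (τ - v i))) *
        (∏ i ∈ Ico (j + 1) (k + 1), ((v j - v i)⁻¹ * (τ - v i))) := by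
      rw [heval, hsplit, prod_union hdisj]
    have hpos2 : 0 < ∏ i ∈ Ico (j + 1) (k + 1), ((v j - v i)⁻¹ * (τ - v i)) := by
      apply prod_pos
      intro i hi
      rw [mem_Ico] at hi
      have h1 : v i < v j := hvlt (by omega) (by omega)
      have h2 : v i < τ := hτv i
      exact mul_pos (inv_pos.mpr (by linarith)) (by linarith)
    have hneg1 : ∏ i ∈ range j, ((v j - v i)⁻¹ * (τ - v i))
        = (-1 : ℝ) ^ j * ∏ i ∈ range j, (-((v j - v i)⁻¹ * (τ - v i))) := by
      have hc : ((-1 : ℝ)) ^ j = ∏ _i ∈ range j, (-1 : ℝ) := by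
        rw [prod_const, card_range]
      rw [hc, ← Finset.prod_mul_distrib]
      exact prod_congr rfl fun i _ => by ring
    have hpos1 : 0 < ∏ i ∈ range j, (-((v j - v i)⁻¹ * (τ - v i))) := by
      apply prod_pos
      intro i hi
      rw [mem_range] at hi
      have h1 : v j < v i := hvlt hjk hi
      have h2 : v i < τ := hτv i
      have h3 : (v j - v i)⁻¹ < 0 := inv_lt_zero.mpr (by linarith)
      nlinarith
    have hsq : (-1 : ℝ) ^ j * ((-1 : ℝ) ^ j) = 1 := by
      rw [← pow_add, ← two_mul, pow_mul]
      simp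
    have hℓsign : 0 < (-1 : ℝ) ^ j * ℓ j := by
      rw [hprod, hneg1]
      have h9 : (-1 : ℝ) ^ j * ((-1 : ℝ) ^ j
            * (∏ i ∈ range j, (-((v j - v i)⁻¹ * (τ - v i))))
            * (∏ i ∈ Ico (j + 1) (k + 1), ((v j - v i)⁻¹ * (τ - v i))))
          = (∏ i ∈ range j, (-((v j - v i)⁻¹ * (τ - v i))))
            * (∏ i ∈ Ico (j + 1) (k + 1), ((v j - v i)⁻¹ * (τ - v i))) := by
        rw [← mul_assoc, ← mul_assoc, hsq, one_mul]
      rw [h9]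
      exact mul_pos hpos1 hpos2
    have habs1 : |ℓ j| = |(-1 : ℝ) ^ j * ℓ j| := by
      rw [abs_mul, abs_pow, abs_neg, abs_one, one_pow, one_mul]
    rw [habs1, abs_of_pos hℓsign]
  -- Chebyshev values at nodes
  have hTeval : ∀ j ∈ range (k + 1), (Polynomial.Chebyshev.T ℝ (k : ℤ)).eval (v j)
      = (-1 : ℝ) ^ j := by
    intro j hj
    have hvj : v j = Real.cos ((j : ℝ) * Real.pi / k) := rfl
    rw [hvj, Polynomial.Chebyshev.T_real_cos]
    have harg : ((k : ℤ) : ℝ) * ((j : ℝ) * Real.pi / k) = ((j : ℤ) : ℝ) * Real.pi - 0 := by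
      push_cast
      field_simp
      ring
    rw [harg, Real.cos_int_mul_pi_sub]
    simp [zpow_natCast]
  have hsumabs : ∑ j ∈ range (k + 1), |ℓ j| = Real.cosh (k * t) := by
    rw [← aux_T_real_cosh k t, ← hτdef, hinterp _ (aux_natDegree_T_le k)]
    refine sum_congr rfl fun j hj => ?_
    rw [hsign j hj, hTeval j hj]
  -- the interpolation identity for p at τ
  have hone : (1 : ℝ) = ∑ j ∈ range (k + 1), p.eval (v j) * ℓ j := by
    have hpi := hinterp p hpdeg
    rw [hpeval τ, hab0, h0] at hpi
    exact hpi
  set B := 1 - 6 * (k : ℝ) ^ 2 / (s0 - 1) ^ 2 with hBdef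
  have habsle : ∀ j ∈ range (k + 1), |p.eval (v j)| ≤ B := by
    intro j hj
    rw [hpeval]
    exact hcon _ (hyy j)
  have hle : (1 : ℝ) ≤ B * Real.cosh ((k : ℝ) * t) := by
    calc (1 : ℝ) = |∑ j ∈ range (k + 1), p.eval (v j) * ℓ j| := by rw [← hone, abs_one]
      _ ≤ ∑ j ∈ range (k + 1), |p.eval (v j) * ℓ j| := abs_sum_le_sum_abs _ _
      _ = ∑ j ∈ range (k + 1), |p.eval (v j)| * |ℓ j| := by simp [abs_mul]
      _ ≤ ∑ j ∈ range (k + 1), B * |ℓ j| :=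
          sum_le_sum fun j hj => mul_le_mul_of_nonneg_right (habsle j hj) (abs_nonneg _)
      _ = B * ∑ j ∈ range (k + 1), |ℓ j| := by rw [mul_sum]
      _ = B * Real.cosh ((k : ℝ) * t) := by rw [hsumabs]
  -- final numeric contradiction
  set x := (k : ℝ) * t with hxdef
  have hx0 : 0 < x := mul_pos hkpos ht0
  have hD : 0 < s0 - 1 := by linarith
  have hxle : x ≤ 2 * k / (s0 - 1) := by
    rw [hxdef]
    calc (k : ℝ) * t ≤ k * (2 / (s0 - 1)) :=
          mul_le_mul_of_nonneg_left htle (le_of_lt hkpos)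
      _ = 2 * k / (s0 - 1) := by ring
  have hxsq : x ^ 2 ≤ 4 * (k : ℝ) ^ 2 / (s0 - 1) ^ 2 := by
    have hmul := mul_le_mul hxle hxle (le_of_lt hx0) (by positivity)
    calc x ^ 2 = x * x := sq x
      _ ≤ (2 * k / (s0 - 1)) * (2 * k / (s0 - 1)) := hmul
      _ = 4 * (k : ℝ) ^ 2 / (s0 - 1) ^ 2 := by field_simp; ring
  have hcoshpos : 0 < Real.cosh x := Real.cosh_pos x
  have hbound := aux_cosh_bound x (le_of_lt hx0)
  have hfrac : x ^ 2 < 6 * (k : ℝ) ^ 2 / (s0 - 1) ^ 2 := by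
    have hB : (0 : ℝ) < (s0 - 1) ^ 2 := by positivity
    have h46 : 4 * (k : ℝ) ^ 2 / (s0 - 1) ^ 2 < 6 * (k : ℝ) ^ 2 / (s0 - 1) ^ 2 :=
      div_lt_div_of_pos_right (by nlinarith) hB
    linarith
  have hlt : B * Real.cosh x < 1 := by
    rw [hBdef]
    nlinarith [hbound, hcoshpos, mul_pos (sub_pos.mpr hfrac) hcoshpos]
  linarith [hle, hlt]
end

section
/- Let S, R ∈ ℝ^{n×n} be symmetric positive semidefinite matrices. Then SR + RS ⪯ 4S² + 4‖S − R‖_σ²·I, i.e., the matrix 4S² + 4‖S − R‖_σ²·I − SR − RS is positive semidefinite. -/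
open Matrix

section aux
variable {n : ℕ}

noncomputable def toE (v : Fin n → ℝ) : EuclideanSpace ℝ (Fin n) :=
  (WithLp.equiv 2 _).symm v

lemma dot_eq_inner (v w : Fin n → ℝ) :
    v ⬝ᵥ w = inner ℝ (toE v) (toE w) := by
  simp [toE, PiLp.inner_apply, dotProduct, mul_comm]

lemma mulVec_norm_le (A : Matrix (Fin n) (Fin n) ℝ) (x : Fin n → ℝ) :
    ‖toE (A *ᵥ x)‖ ≤ specNorm A * ‖toE x‖ := by
  have h := (Matrix.toEuclideanCLM (𝕜 := ℝ) A).le_opNorm (toE x)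
  have heq : Matrix.toEuclideanCLM (𝕜 := ℝ) A (toE x) = toE (A *ᵥ x) := rfl
  rw [heq] at h
  exact h

lemma sym_dot (A : Matrix (Fin n) (Fin n) ℝ) (hA : A.IsHermitian)
    (x v : Fin n → ℝ) : x ⬝ᵥ (A *ᵥ v) = (A *ᵥ x) ⬝ᵥ v := by
  rw [Matrix.dotProduct_mulVec, ← Matrix.mulVec_transpose]
  have hAt : Aᵀ = A := by
    ext i j
    have := congrFun (congrFun hA.eq i) j
    simpa using this
  rw [hAt]

end aux

/-- For symmetric PSD matrices `S, R`, we have `SR + RS ⪯ 4 S² + 4 ‖S − R‖_σ² I`. -/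
theorem sr_ineq {n : ℕ} (S R : Matrix (Fin n) (Fin n) ℝ)
    (hS : S.PosSemidef) (hR : R.PosSemidef) :
    ((4 : ℝ) • (S * S) + (4 * specNorm (S - R) ^ 2) • (1 : Matrix (Fin n) (Fin n) ℝ)
      - S * R - R * S).PosSemidef := by
  set c : ℝ := specNorm (S - R) with hc
  rw [Matrix.posSemidef_iff_dotProduct_mulVec]
  constructor
  · have h1 := hS.1
    have h2 := hR.1
    unfold Matrix.IsHermitian at *
    simp only [conjTranspose_sub, conjTranspose_add, conjTranspose_smul, conjTranspose_mul,
      conjTranspose_one, h1, h2, star_trivial]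
    ring_nf
    abel
  · intro x
    simp only [star_trivial]
    set a := S *ᵥ x with ha
    set e := (S - R) *ᵥ x with he
    have hRx : R *ᵥ x = a - e := by
      simp [he, ha, Matrix.sub_mulVec]
    have key : x ⬝ᵥ (((4 : ℝ) • (S * S) + (4 * c ^ 2) • (1 : Matrix (Fin n) (Fin n) ℝ)
        - S * R - R * S) *ᵥ x) = 2 * (a ⬝ᵥ a) + 2 * (a ⬝ᵥ e) + 4 * c ^ 2 * (x ⬝ᵥ x) := by
      simp only [Matrix.sub_mulVec, Matrix.add_mulVec, Matrix.smul_mulVec,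
        Matrix.one_mulVec, ← Matrix.mulVec_mulVec, dotProduct_sub, dotProduct_add,
        dotProduct_smul, smul_eq_mul]
      rw [sym_dot S hS.1 x (S *ᵥ x), sym_dot S hS.1 x (R *ᵥ x), sym_dot R hR.1 x (S *ᵥ x),
        hRx]
      rw [show (S *ᵥ x) = a from rfl]
      have hcomm : (a - e) ⬝ᵥ a = a ⬝ᵥ (a - e) := dotProduct_comm _ _
      rw [hcomm]
      simp [dotProduct_sub]
      ring
    rw [key]
    have haa : a ⬝ᵥ a = ‖toE a‖ ^ 2 := by
      rw [dot_eq_inner]; exact real_inner_self_eq_norm_sq _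
    have hxx : x ⬝ᵥ x = ‖toE x‖ ^ 2 := by
      rw [dot_eq_inner]; exact real_inner_self_eq_norm_sq _
    have hae : -(‖toE a‖ * ‖toE e‖) ≤ a ⬝ᵥ e := by
      rw [dot_eq_inner]
      exact neg_le_of_abs_le (abs_real_inner_le_norm _ _)
    have hne : ‖toE e‖ ≤ c * ‖toE x‖ := mulVec_norm_le _ _
    have h0a : (0:ℝ) ≤ ‖toE a‖ := norm_nonneg _
    have h0e : (0:ℝ) ≤ ‖toE e‖ := norm_nonneg _
    have h0x : (0:ℝ) ≤ ‖toE x‖ := norm_nonneg _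
    nlinarith [sq_nonneg (2 * ‖toE a‖ - ‖toE e‖), sq_nonneg (‖toE e‖), mul_self_nonneg (c * ‖toE x‖ - ‖toE e‖), sq_nonneg (c * ‖toE x‖)]
end

section
/- Suppose F : ℝ^n → ℝ^n is a monotone operator, η > 0, and z : ℕ → ℝ^n is a sequence satisfying the proximal point recursion z^{t+1} = z^t − ηF(z^{t+1}) for all t ≥ 0. If there exists z* ∈ ℝ^n with F(z*) = 0 and ‖z^0 − z*‖ ≤ D for some D > 0, then for every integer T ≥ 1, ‖F(z^T)‖ ≤ D/(η√T). -/
/-- Last-iterate convergence of the proximal point algorithm for a monotone operator: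
if `z^{t+1} = z^t − η F(z^{t+1})`, `F(z*) = 0`, and `‖z⁰ − z*‖ ≤ D`, then
`‖F(z^T)‖ ≤ D/(η √T)` for every `T ≥ 1`. -/
theorem proximal_point_last_iterate {n : ℕ}
    (F : EuclideanSpace ℝ (Fin n) → EuclideanSpace ℝ (Fin n))
    (hmono : ∀ z z', (0 : ℝ) ≤ inner ℝ (F z - F z') (z - z'))
    (η : ℝ) (hη : 0 < η)
    (z : ℕ → EuclideanSpace ℝ (Fin n))
    (hrec : ∀ t : ℕ, z (t + 1) = z t - η • F (z (t + 1)))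
    (zstar : EuclideanSpace ℝ (Fin n)) (hzstar : F zstar = 0)
    (D : ℝ) (hD : 0 < D) (hinit : ‖z 0 - zstar‖ ≤ D)
    (T : ℕ) (hT : 1 ≤ T) :
    ‖F (z T)‖ ≤ D / (η * Real.sqrt T) := by
  -- Fejér-type one step inequality
  have fejer : ∀ t : ℕ,
      ‖z (t+1) - zstar‖^2 + η^2 * ‖F (z (t+1))‖^2 ≤ ‖z t - zstar‖^2 := by
    intro t
    have hz : z t - zstar = (z (t+1) - zstar) + η • F (z (t+1)) := by
      rw [← eq_sub_iff_add_eq.mp (hrec t)]; abel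
    have hin : (0:ℝ) ≤ inner ℝ (F (z (t+1))) (z (t+1) - zstar) := by
      have := hmono (z (t+1)) zstar
      simpa [hzstar] using this
    have hexp : ‖z t - zstar‖^2 = ‖z (t+1) - zstar‖^2
        + 2 * inner ℝ (z (t+1) - zstar) (η • F (z (t+1))) + ‖η • F (z (t+1))‖^2 := by
      rw [hz, @norm_add_sq_real]
    have h1 : (0:ℝ) ≤ inner ℝ (z (t+1) - zstar) (η • F (z (t+1))) := by
      rw [real_inner_smul_right]
      exact mul_nonneg hη.le (by rw [real_inner_comm]; exact hin)
    have h2 : ‖η • F (z (t+1))‖^2 = η^2 * ‖F (z (t+1))‖^2 := by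
      rw [norm_smul, Real.norm_eq_abs, mul_pow, sq_abs]
    rw [hexp, h2]
    linarith
  -- summed inequality
  have sum_le : ∀ m : ℕ,
      (∑ t ∈ Finset.range m, η^2 * ‖F (z (t+1))‖^2) + ‖z m - zstar‖^2
        ≤ ‖z 0 - zstar‖^2 := by
    intro m
    induction m with
    | zero => simp
    | succ k ih =>
      rw [Finset.sum_range_succ]
      have := fejer k
      linarith
  -- monotone decrease of ‖F (z t)‖
  have dec : ∀ t : ℕ, ‖F (z (t+1))‖ ≤ ‖F (z t)‖ := by
    intro t
    have hm := hmono (z (t+1)) (z t)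
    have hz : z (t+1) - z t = -(η • F (z (t+1))) := by
      rw [← eq_sub_iff_add_eq.mp (hrec t)]; abel
    rw [hz, inner_neg_right, real_inner_smul_right] at hm
    have h3 : (inner ℝ (F (z (t+1)) - F (z t)) (F (z (t+1))) : ℝ) ≤ 0 := by nlinarith
    rw [inner_sub_left, real_inner_self_eq_norm_sq] at h3
    have hc : (inner ℝ (F (z t)) (F (z (t+1))) : ℝ) ≤ ‖F (z t)‖ * ‖F (z (t+1))‖ :=
      real_inner_le_norm _ _
    nlinarith [norm_nonneg (F (z (t+1))), norm_nonneg (F (z t))]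
  have anti : ∀ s t : ℕ, s ≤ t → ‖F (z t)‖ ≤ ‖F (z s)‖ := by
    intro s t hst
    induction t with
    | zero => interval_cases s; simp
    | succ k ih =>
      rcases Nat.lt_or_ge s (k+1) with h | h
      · exact le_trans (dec k) (ih (Nat.lt_succ_iff.mp h))
      · have hs : s = k + 1 := le_antisymm hst h
        simp [hs]
  -- key quantitative bound
  have key : (T:ℝ) * (η^2 * ‖F (z T)‖^2) ≤ D^2 := by
    have h1 : (T:ℝ) * (η^2 * ‖F (z T)‖^2)
        ≤ ∑ t ∈ Finset.range T, η^2 * ‖F (z (t+1))‖^2 := by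
      have := Finset.card_nsmul_le_sum (Finset.range T)
        (fun t => η^2 * ‖F (z (t+1))‖^2) (η^2 * ‖F (z T)‖^2)
        (fun i hi => by
          have hle : ‖F (z T)‖ ≤ ‖F (z (i+1))‖ :=
            anti (i+1) T (Nat.succ_le_of_lt (Finset.mem_range.mp hi))
          have h2 := pow_le_pow_left₀ (norm_nonneg _) hle 2
          show η ^ 2 * ‖F (z T)‖ ^ 2 ≤ η ^ 2 * ‖F (z (i + 1))‖ ^ 2
          nlinarith [sq_nonneg η])
      simpa [nsmul_eq_mul, mul_comm] using this
    have h2 : ‖z 0 - zstar‖^2 ≤ D^2 := pow_le_pow_left₀ (norm_nonneg _) hinit 2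
    have h3 := sum_le T
    nlinarith [sq_nonneg ‖z T - zstar‖]
  have hT1 : (1:ℝ) ≤ (T:ℝ) := by exact_mod_cast hT
  have hs : (0:ℝ) < Real.sqrt T := Real.sqrt_pos.mpr (by linarith)
  rw [le_div_iff₀ (by positivity)]
  have hsqT : (Real.sqrt T)^2 = (T:ℝ) := Real.sq_sqrt (by positivity)
  have hsq : (‖F (z T)‖ * (η * Real.sqrt T))^2 ≤ D^2 := by
    have : (‖F (z T)‖ * (η * Real.sqrt T))^2 = (T:ℝ) * (η^2 * ‖F (z T)‖^2) := by
      rw [mul_pow, mul_pow, hsqT]; ring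
    linarith [key]
  nlinarith [hsq, hD, mul_nonneg (norm_nonneg (F (z T))) (mul_pos hη hs).le]
end

section
/- Let n ≥ 2 be even, ν > 0, and let A = [[0, νI], [−νI, 0]] ∈ ℝ^{n×n} where I is the (n/2)×(n/2) identity. Let q be any polynomial with real coefficients. Then for every b ∈ ℝ^n, ‖q(A)·b‖ = |q(νi)|·‖b‖, where q(A) denotes evaluation of q at the matrix A, and |q(νi)| is the complex modulus of q evaluated at the purely imaginary number νi. -/
open Matrix

/-- The Euclidean norm of a real vector. -/
noncomputable def enorm {ι : Type*} [Fintype ι] (v : ι → ℝ) : ℝ := Real.sqrt (∑ i, v i ^ 2)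

/-- For `A = [[0, νI], [−νI, 0]]` and any real polynomial `q`,
`‖q(A) b‖ = |q(νi)| ‖b‖` for every `b`, where `|q(νi)|` is the complex modulus of
the evaluation of `q` at the purely imaginary number `νi`. -/
theorem norm_poly_eval_block_matrix (n : ℕ) (hn : 2 ≤ n) (hneven : Even n)
    (ν : ℝ) (hν : 0 < ν) (q : Polynomial ℝ)
    (A : Matrix (Fin (n / 2) ⊕ Fin (n / 2)) (Fin (n / 2) ⊕ Fin (n / 2)) ℝ)
    (hA : A = Matrix.fromBlocks 0 (ν • (1 : Matrix (Fin (n / 2)) (Fin (n / 2)) ℝ))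
      (-(ν • (1 : Matrix (Fin (n / 2)) (Fin (n / 2)) ℝ))) 0) :
    ∀ b : Fin (n / 2) ⊕ Fin (n / 2) → ℝ,
      _root_.enorm ((Polynomial.aeval A q) *ᵥ b)
        = ‖Polynomial.aeval ((ν : ℂ) * Complex.I) q‖ * _root_.enorm b := by
  intro b
  set z : ℂ := (ν : ℂ) * Complex.I with hz
  have hA2 : A * A = (-(ν ^ 2)) • (1 : Matrix (Fin (n / 2) ⊕ Fin (n / 2)) (Fin (n / 2) ⊕ Fin (n / 2)) ℝ) := by
    rw [hA, Matrix.fromBlocks_multiply]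
    rw [← Matrix.fromBlocks_one]
    ext (i | i) (j | j) <;>
      simp [Matrix.one_apply, mul_ite, pow_two, ] <;> split <;> ring
  have hz2 : z ^ 2 = -(ν ^ 2 : ℝ) := by
    rw [hz, mul_pow, Complex.I_sq]
    push_cast
    ring
  have hpow : ∀ k : ℕ, ∃ c d : ℝ, A ^ k = c • 1 + d • A ∧ z ^ k = (c : ℂ) + (d : ℂ) * z := by
    intro k
    induction k with
    | zero => exact ⟨1, 0, by simp, by simp⟩
    | succ k ih =>
      obtain ⟨c, d, h1, h2⟩ := ih
      refine ⟨-(ν ^ 2) * d, c, ?_, ?_⟩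
      · rw [pow_succ, h1, add_mul, smul_mul_assoc, smul_mul_assoc, one_mul, hA2]
        module
      · have : z ^ (k + 1) = (c + d * z) * z := by rw [pow_succ, h2]
        rw [this]
        have : (c + d * z) * z = c * z + d * z ^ 2 := by ring
        rw [this, hz2]
        push_cast
        ring
  have hq : ∃ c d : ℝ, Polynomial.aeval A q = c • 1 + d • A ∧
      Polynomial.aeval z q = (c : ℂ) + (d : ℂ) * z := by
    induction q using Polynomial.induction_on' with
    | add p r hp hr =>
      obtain ⟨c1, d1, e1, f1⟩ := hp
      obtain ⟨c2, d2, e2, f2⟩ := hr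
      refine ⟨c1 + c2, d1 + d2, ?_, ?_⟩
      · rw [map_add, e1, e2]; module
      · rw [map_add, f1, f2]; push_cast; ring
    | monomial k a =>
      obtain ⟨c, d, h1, h2⟩ := hpow k
      refine ⟨a * c, a * d, ?_, ?_⟩
      · rw [Polynomial.aeval_monomial, h1, Algebra.algebraMap_eq_smul_one,
          smul_mul_assoc, one_mul]
        module
      · rw [Polynomial.aeval_monomial, h2]
        simp only [Complex.coe_algebraMap]
        push_cast
        ring
  obtain ⟨c, d, h1, h2⟩ := hq
  have hl : ∀ i, (A *ᵥ b) (Sum.inl i) = ν * b (Sum.inr i) := by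
    intro i
    simp [hA, Matrix.mulVec, dotProduct, Fintype.sum_sum_type, Matrix.one_apply,
      mul_ite, Finset.sum_ite_eq]
  have hr : ∀ i, (A *ᵥ b) (Sum.inr i) = -ν * b (Sum.inl i) := by
    intro i
    simp [hA, Matrix.mulVec, dotProduct, Fintype.sum_sum_type, Matrix.one_apply,
      mul_ite, Finset.sum_ite_eq]
  have hvec : (Polynomial.aeval A q) *ᵥ b = fun s => c * b s + d * (A *ᵥ b) s := by
    rw [h1, Matrix.add_mulVec, Matrix.smul_mulVec, Matrix.smul_mulVec,
      Matrix.one_mulVec]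
    rfl
  have hsum : ∑ s, (c * b s + d * (A *ᵥ b) s) ^ 2 = (c ^ 2 + d ^ 2 * ν ^ 2) * ∑ s, b s ^ 2 := by
    simp only [Fintype.sum_sum_type]
    rw [← Finset.sum_add_distrib, mul_add, Finset.mul_sum, Finset.mul_sum,
      ← Finset.sum_add_distrib]
    apply Finset.sum_congr rfl
    intro i _
    rw [hl i, hr i]
    ring
  have habs : ‖Polynomial.aeval z q‖ = Real.sqrt (c ^ 2 + d ^ 2 * ν ^ 2) := by
    rw [h2]
    have : (c : ℂ) + (d : ℂ) * z = (c : ℂ) + ((d * ν : ℝ) : ℂ) * Complex.I := by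
      rw [hz]; push_cast; ring
    rw [this, Complex.norm_add_mul_I]
    ring_nf
  rw [hvec, habs, _root_.enorm, _root_.enorm, hsum, Real.sqrt_mul (by positivity)]
end
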